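/- arXiv:math/0110077 — 3 statements merged into one kernel-verified Lean document; each statement's English description precedes it below -/
import Mathlib

section
/- For all integers p, q ≥ 0, every sequence a = (aᵢ)_{i∈ℤ} and every n ≥ 1, the following identity of polynomials in (x₁,…,xₙ;y₁,…,yₙ) holds: s_{(p+1|q);a} + s_{(p|q+1);a} + (a_{p+1} + â_{q+1})·s_{(p|q);a} = s_{(p|0);a} · s_{(0|q);a}. -/
open Finset

noncomputable section

/-- `μ : ℕ → ℕ` (0-indexed: `μ i` is the `(i+1)`-st part) is a partition. -/
def IsPartition (μ : ℕ → ℕ) : Prop := Antitone μ ∧ ∃ N, ∀ i, N ≤ i → μ i = 0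

/-- number of boxes `|μ|` -/
def psize (μ : ℕ → ℕ) : ℕ := Nat.card {p : ℕ × ℕ // p.2 < μ p.1}

/-- number of nonzero parts `ℓ(μ)` -/
def plen (μ : ℕ → ℕ) : ℕ := Nat.card {i : ℕ // 0 < μ i}

/-- conjugate partition (0-indexed) -/
def conjP (μ : ℕ → ℕ) : ℕ → ℕ := fun j => Nat.card {i : ℕ // j < μ i}

/-- depth `d(μ)`: the number of `i ≥ 1` (1-indexed) with `μᵢ ≥ i` -/
def depth (μ : ℕ → ℕ) : ℕ := Nat.card {i : ℕ // i < μ i}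

/-- containment of Young diagrams -/
def subP (μ ν : ℕ → ℕ) : Prop := ∀ i, μ i ≤ ν i

/-- `dim(μ,ν)`: number of saturated chains `μ = λ⁰ ⊂ λ¹ ⊂ ⋯ ⊂ λᵏ = ν`,
  `k = |ν| - |μ|`, `|λᵗ| = |μ| + t`. -/
def relDim (μ ν : ℕ → ℕ) : ℕ :=
  Nat.card {c : Fin (psize ν - psize μ + 1) → (ℕ → ℕ) //
    c 0 = μ ∧ c (Fin.last _) = ν ∧ (∀ t, IsPartition (c t)) ∧
    ∀ t : Fin (psize ν - psize μ),
      subP (c t.castSucc) (c t.succ) ∧ psize (c t.succ) = psize (c t.castSucc) + 1}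

/-- `dim ν` : number of standard tableaux of shape `ν` -/
def dimP (ν : ℕ → ℕ) : ℕ := relDim (fun _ => 0) ν

/-- the hook partition `(p|q) = (p+1, 1^q)` -/
def hookP (p q : ℕ) : ℕ → ℕ := fun i => if i = 0 then p + 1 else if i ≤ q then 1 else 0

/-- Frobenius coordinate `pᵢ = μᵢ - i` (0-indexed input `i`) -/
def frobP (μ : ℕ → ℕ) (i : ℕ) : ℕ := μ i - (i + 1)
/-- Frobenius coordinate `qᵢ = μ'ᵢ - i` (0-indexed input `i`) -/
def frobQ (μ : ℕ → ℕ) (i : ℕ) : ℕ := conjP μ i - (i + 1)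

/-- the ring of polynomials in `x₁,…,xₙ, y₁,…,yₙ` over `ℂ` -/
abbrev SSRing (n : ℕ) := MvPolynomial (Fin n ⊕ Fin n) ℂ

/-- the power series `1/∏_{i=1}^{k}(1 - cᵢ t)` (inverse computed via `invOfUnit`) -/
def denomInv (R : Type*) [CommRing R] (c : ℕ → R) (k : ℕ) : PowerSeries R :=
  PowerSeries.invOfUnit (∏ i ∈ Finset.range k, (1 - PowerSeries.C (R := R) (c i) * PowerSeries.X)) 1

/-- the power series `∏_{i=1}^{n} (1 + yᵢ t)/(1 - xᵢ t)` -/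
def hGenSeries (n : ℕ) : PowerSeries (SSRing n) :=
  (∏ i : Fin n, (1 + PowerSeries.C (R := SSRing n) (MvPolynomial.X (Sum.inr i)) * PowerSeries.X)) *
    PowerSeries.invOfUnit
      (∏ i : Fin n, (1 - PowerSeries.C (R := SSRing n) (MvPolynomial.X (Sum.inl i)) * PowerSeries.X)) 1

/-- `h` is the family of multiparameter complete homogeneous supersymmetric polynomials:
`h a k = h_{k;a}(x₁,…,xₙ;y₁,…,yₙ)`, characterized by `h_{k;a} = 0` for `k < 0`, `h_{0;a} = 1`, and
`∏_{i=1}^n (1+yᵢt)/(1-xᵢt) = ∑_{k≥0} h_{k;a} tᵏ/∏_{i=1}^k (1-aᵢt)` (an identity of formal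
power series in `t`, stated coefficientwise). -/
def IsH (n : ℕ) (h : (ℤ → ℂ) → ℤ → SSRing n) : Prop :=
  (∀ (a : ℤ → ℂ) (k : ℤ), k < 0 → h a k = 0) ∧ (∀ a, h a 0 = 1) ∧
  ∀ a : ℤ → ℂ, hGenSeries n = PowerSeries.mk (fun N =>
    ∑ k ∈ Finset.range (N + 1),
      h a k * PowerSeries.coeff (R := SSRing n) (N - k)
        (denomInv (SSRing n) (fun i => MvPolynomial.C (a ((i : ℤ) + 1))) k))

/-- shift of a parameter sequence: `(τʳ a)ᵢ = a_{i+r}` -/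
def tauSeq (a : ℤ → ℂ) (r : ℤ) : ℤ → ℂ := fun i => a (i + r)

/-- dual sequence `âᵢ = -a_{-i+1}` -/
def adual (a : ℤ → ℂ) : ℤ → ℂ := fun i => -a (1 - i)

/-- the multiparameter Schur polynomial `s_{μ;a} = det[h_{μᵢ-i+j; τ^{1-j}a}]_{1≤i,j≤ℓ(μ)}` -/
def schurDet {n : ℕ} (h : (ℤ → ℂ) → ℤ → SSRing n) (a : ℤ → ℂ) (μ : ℕ → ℕ) : SSRing n :=
  Matrix.det (Matrix.of fun i j : Fin (plen μ) =>
    h (tauSeq a (-(j : ℕ) : ℤ)) ((μ (i : ℕ) : ℤ) - (i : ℕ) + (j : ℕ)))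

/-- the Frobenius-Schur sequence `aᵢ = i - 1/2` -/
def aFS : ℤ → ℂ := fun i => (i : ℂ) - 1/2


namespace HookAux

lemma denom_mul_denomInv (R : Type*) [CommRing R] (c : ℕ → R) (k : ℕ) :
    (∏ i ∈ Finset.range k, (1 - PowerSeries.C (R := R) (c i) * PowerSeries.X)) * denomInv R c k = 1 := by
  apply PowerSeries.mul_invOfUnit
  simp

lemma isUnit_denom (R : Type*) [CommRing R] (c : ℕ → R) (k : ℕ) :
    IsUnit (∏ i ∈ Finset.range k, (1 - PowerSeries.C (R := R) (c i) * PowerSeries.X)) :=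
  IsUnit.of_mul_eq_one _ (denom_mul_denomInv R c k)

end HookAux
namespace HookAux
variable {n : ℕ}

lemma denomInv_shift (a : ℤ → ℂ) (k : ℕ) :
    denomInv (SSRing n) (fun i => MvPolynomial.C (a ((i : ℤ) + 1))) k
      = denomInv (SSRing n) (fun i => MvPolynomial.C (a (i : ℤ))) k
        + PowerSeries.C (MvPolynomial.C (a (k : ℤ) - a 0)) * PowerSeries.X *
          denomInv (SSRing n) (fun i => MvPolynomial.C (a (i : ℤ))) (k + 1) := by
  set cA : ℕ → SSRing n := fun i => MvPolynomial.C (a ((i : ℤ) + 1)) with hcA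
  set cB : ℕ → SSRing n := fun i => MvPolynomial.C (a (i : ℤ)) with hcB
  set P : PowerSeries (SSRing n) :=
    ∏ i ∈ Finset.range (k + 1), (1 - PowerSeries.C (cB i) * PowerSeries.X) with hP
  have hPA : P = (∏ i ∈ Finset.range k, (1 - PowerSeries.C (cA i) * PowerSeries.X)) *
      (1 - PowerSeries.C (cB 0) * PowerSeries.X) := by
    rw [hP, Finset.prod_range_succ']
    have hfun : ∀ i ∈ Finset.range k,
        (1 - PowerSeries.C (R := SSRing n) (cB (i + 1)) * PowerSeries.X)
          = (1 - PowerSeries.C (R := SSRing n) (cA i) * PowerSeries.X) := by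
      intro i _
      have : cB (i + 1) = cA i := by
        simp only [hcA, hcB]
        push_cast
        ring_nf
      rw [this]
    rw [Finset.prod_congr rfl hfun]
  have hPB : P = (∏ i ∈ Finset.range k, (1 - PowerSeries.C (cB i) * PowerSeries.X)) *
      (1 - PowerSeries.C (cB k) * PowerSeries.X) := by
    rw [hP, Finset.prod_range_succ]
  have hPunit : IsUnit P := isUnit_denom _ cB (k + 1)
  apply hPunit.mul_left_cancel
  have e1 : P * denomInv (SSRing n) cA k = 1 - PowerSeries.C (cB 0) * PowerSeries.X := by
    rw [hPA, mul_comm _ (1 - PowerSeries.C (cB 0) * PowerSeries.X), mul_assoc,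
      denom_mul_denomInv, mul_one]
  have e2 : (∏ i ∈ Finset.range k, (1 - PowerSeries.C (cB i) * PowerSeries.X)) *
      denomInv (SSRing n) cB k = 1 := denom_mul_denomInv _ cB k
  have e3 : P * denomInv (SSRing n) cB (k + 1) = 1 := denom_mul_denomInv _ cB (k + 1)
  rw [e1, mul_add]
  rw [show P * (PowerSeries.C (MvPolynomial.C (a (k : ℤ) - a 0)) * PowerSeries.X *
      denomInv (SSRing n) cB (k + 1))
    = PowerSeries.C (MvPolynomial.C (a (k : ℤ) - a 0)) * PowerSeries.X *
      (P * denomInv (SSRing n) cB (k + 1)) by ring, e3, mul_one]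
  rw [hPB, mul_comm _ (1 - PowerSeries.C (cB k) * PowerSeries.X), mul_assoc, e2, mul_one]
  have : (MvPolynomial.C (a (k : ℤ) - a 0) : SSRing n) = cB k - cB 0 := by
    simp [hcB, map_sub]
  rw [this]
  simp only [map_sub]
  ring

end HookAux
namespace HookAux
variable {n : ℕ}

lemma sum_unique (g1 g2 : ℕ → SSRing n) (c : ℕ → SSRing n)
    (hs : ∀ N, ∑ k ∈ Finset.range (N + 1),
        g1 k * PowerSeries.coeff (N - k) (denomInv (SSRing n) c k)
      = ∑ k ∈ Finset.range (N + 1),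
        g2 k * PowerSeries.coeff (N - k) (denomInv (SSRing n) c k)) :
    ∀ N, g1 N = g2 N := by
  intro N
  induction N using Nat.strong_induction_on with
  | _ N ih =>
    have h0 : PowerSeries.coeff (R := SSRing n) 0 (denomInv (SSRing n) c N) = 1 := by
      rw [PowerSeries.coeff_zero_eq_constantCoeff_apply, denomInv,
        PowerSeries.constantCoeff_invOfUnit]
      simp
    have hN := hs N
    rw [Finset.sum_range_succ, Finset.sum_range_succ] at hN
    have hsum : ∑ k ∈ Finset.range N,
        g1 k * PowerSeries.coeff (N - k) (denomInv (SSRing n) c k)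
      = ∑ k ∈ Finset.range N,
        g2 k * PowerSeries.coeff (N - k) (denomInv (SSRing n) c k) :=
      Finset.sum_congr rfl fun k hk => by rw [ih k (Finset.mem_range.mp hk)]
    rw [hsum] at hN
    have := add_left_cancel hN
    simpa [h0] using this

end HookAux
namespace HookAux
variable {n : ℕ}

lemma h_tau_one (h : (ℤ → ℂ) → ℤ → SSRing n) (hh : IsH n h) (a : ℤ → ℂ) (m : ℤ) :
    h (tauSeq a (-1)) m = h a m + MvPolynomial.C (a (m - 1) - a 0) * h a (m - 1) := by
  obtain ⟨hneg, h0, hgen⟩ := hh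
  rcases lt_or_ge m 0 with hm | hm
  · rw [hneg _ _ hm, hneg _ _ (by omega : m - 1 < 0), hneg _ _ hm]
    ring
  · lift m to ℕ using hm
    set cA : ℕ → SSRing n := fun i => MvPolynomial.C (a ((i : ℤ) + 1)) with hcA
    set cB : ℕ → SSRing n := fun i => MvPolynomial.C (a (i : ℤ)) with hcB
    set b : ℤ → ℂ := tauSeq a (-1) with hb
    have hcBb : (fun i : ℕ => MvPolynomial.C (b ((i : ℤ) + 1)) : ℕ → SSRing n) = cB := by
      funext i
      simp only [hb, tauSeq, hcB]
      norm_num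
    -- equality of the two expansions, coefficientwise
    have key : ∀ N : ℕ, ∑ k ∈ Finset.range (N + 1),
        h b k * PowerSeries.coeff (N - k) (denomInv (SSRing n) cB k)
      = ∑ k ∈ Finset.range (N + 1),
        (h a k + MvPolynomial.C (a ((k : ℤ) - 1) - a 0) * h a ((k : ℤ) - 1)) *
          PowerSeries.coeff (N - k) (denomInv (SSRing n) cB k) := by
      intro N
      have hBexp : PowerSeries.coeff (R := SSRing n) N (hGenSeries n)
          = ∑ k ∈ Finset.range (N + 1),
            h b k * PowerSeries.coeff (N - k) (denomInv (SSRing n) cB k) := by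
        conv_lhs => rw [hgen b]
        rw [PowerSeries.coeff_mk, hcBb]
      have hAexp : PowerSeries.coeff (R := SSRing n) N (hGenSeries n)
          = ∑ k ∈ Finset.range (N + 1),
            h a k * PowerSeries.coeff (N - k) (denomInv (SSRing n) cA k) := by
        conv_lhs => rw [hgen a]
        rw [PowerSeries.coeff_mk]
      rw [← hBexp, hAexp]
      -- expand RHS
      have hrhs : ∑ k ∈ Finset.range (N + 1),
          (h a k + MvPolynomial.C (a ((k : ℤ) - 1) - a 0) * h a ((k : ℤ) - 1)) *
            PowerSeries.coeff (N - k) (denomInv (SSRing n) cB k)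
        = (∑ k ∈ Finset.range (N + 1),
            h a k * PowerSeries.coeff (N - k) (denomInv (SSRing n) cB k))
          + ∑ k ∈ Finset.range (N + 1),
            MvPolynomial.C (a ((k : ℤ) - 1) - a 0) * h a ((k : ℤ) - 1) *
              PowerSeries.coeff (N - k) (denomInv (SSRing n) cB k) := by
        rw [← Finset.sum_add_distrib]
        exact Finset.sum_congr rfl fun k _ => by ring
      rw [hrhs]
      -- second sum : peel bottom term (zero) and reindex
      have h2 : ∑ k ∈ Finset.range (N + 1),
          MvPolynomial.C (a ((k : ℤ) - 1) - a 0) * h a ((k : ℤ) - 1) *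
            PowerSeries.coeff (N - k) (denomInv (SSRing n) cB k)
        = ∑ k ∈ Finset.range N,
            MvPolynomial.C (a (k : ℤ) - a 0) * h a (k : ℤ) *
              PowerSeries.coeff (N - k - 1) (denomInv (SSRing n) cB (k + 1)) := by
        rw [Finset.sum_range_succ']
        have hz : h a ((0 : ℤ) - 1) = 0 := hneg _ _ (by omega)
        simp only [Nat.cast_zero, hz, mul_zero, zero_mul, add_zero]
        apply Finset.sum_congr rfl
        intro k hk
        have : ((k + 1 : ℕ) : ℤ) - 1 = (k : ℤ) := by omega
        rw [this, Nat.sub_sub]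
      rw [h2]
      -- LHS: expand via denomInv_shift
      have hlhs : ∑ k ∈ Finset.range (N + 1),
          h a k * PowerSeries.coeff (N - k) (denomInv (SSRing n) cA k)
        = (∑ k ∈ Finset.range (N + 1),
            h a k * PowerSeries.coeff (N - k) (denomInv (SSRing n) cB k))
          + ∑ k ∈ Finset.range (N + 1),
            h a k * PowerSeries.coeff (N - k)
              (PowerSeries.C (MvPolynomial.C (a (k : ℤ) - a 0)) * PowerSeries.X *
                denomInv (SSRing n) cB (k + 1)) := by
        rw [← Finset.sum_add_distrib]
        apply Finset.sum_congr rfl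
        intro k _
        rw [hcA, hcB, denomInv_shift a k, map_add]
        ring
      rw [hlhs]
      congr 1
      -- remaining: match the correction sums
      rw [Finset.sum_range_succ]
      have htop : PowerSeries.coeff (R := SSRing n) (N - N)
          (PowerSeries.C (MvPolynomial.C (a (N : ℤ) - a 0)) * PowerSeries.X *
            denomInv (SSRing n) cB (N + 1)) = 0 := by
        rw [Nat.sub_self, PowerSeries.coeff_zero_eq_constantCoeff_apply]
        simp
      rw [htop, mul_zero, add_zero]
      apply Finset.sum_congr rfl
      intro k hk
      have hk' : k < N := Finset.mem_range.mp hk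
      obtain ⟨j, hj⟩ : ∃ j, N - k = j + 1 := ⟨N - k - 1, by omega⟩
      rw [mul_assoc, hj, PowerSeries.coeff_C_mul, PowerSeries.coeff_succ_X_mul,
        Nat.add_sub_cancel]
      ring
    -- uniqueness
    have := sum_unique (fun k => h b k)
      (fun k => h a k + MvPolynomial.C (a ((k : ℤ) - 1) - a 0) * h a ((k : ℤ) - 1)) cB key m
    simpa using this

end HookAux
namespace HookAux
variable {n : ℕ}

lemma tauSeq_tauSeq (a : ℤ → ℂ) (r s : ℤ) : tauSeq (tauSeq a r) s = tauSeq a (s + r) := by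
  funext i
  simp [tauSeq, add_assoc]

lemma tauSeq_zero (a : ℤ → ℂ) : tauSeq a 0 = a := by
  funext i
  simp [tauSeq]

lemma plen_hook (p q : ℕ) : plen (hookP p q) = q + 1 := by
  have hiff : ∀ i, 0 < hookP p q i ↔ i < q + 1 := by
    intro i
    unfold hookP
    split_ifs <;> omega
  have e1 : {i : ℕ // 0 < hookP p q i} ≃ {i : ℕ // i < q + 1} :=
    Equiv.subtypeEquivRight fun i => hiff i
  have e2 : Fin (q + 1) ≃ {i : ℕ // i < q + 1} := Fin.equivSubtype
  unfold plen
  rw [Nat.card_congr e1, ← Nat.card_congr e2, Nat.card_eq_fintype_card, Fintype.card_fin]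

lemma schurDet_eq_det (h : (ℤ → ℂ) → ℤ → SSRing n) (a : ℤ → ℂ) (μ : ℕ → ℕ) (m : ℕ)
    (hm : plen μ = m) :
    schurDet h a μ = Matrix.det (Matrix.of fun i j : Fin m =>
      h (tauSeq a (-(j : ℕ) : ℤ)) ((μ (i : ℕ) : ℤ) - (i : ℕ) + (j : ℕ))) := by
  subst hm
  rfl

lemma hook_det_base (h : (ℤ → ℂ) → ℤ → SSRing n) (a : ℤ → ℂ) (p : ℕ) :
    schurDet h a (hookP p 0) = h a ((p : ℤ) + 1) := by
  rw [schurDet_eq_det h a _ 1 (plen_hook p 0), Matrix.det_fin_one]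
  rw [Matrix.of_apply]
  have h1 : tauSeq a (-((((0 : Fin 1) : ℕ)) : ℤ)) = a := by
    simp [tauSeq_zero]
  rw [h1]
  congr 1

end HookAux
namespace HookAux
variable {n : ℕ}

lemma h_congr (h : (ℤ → ℂ) → ℤ → SSRing n) {a b : ℤ → ℂ} {k l : ℤ}
    (h1 : a = b) (h2 : k = l) : h a k = h b l := by rw [h1, h2]

lemma hook_det_step (h : (ℤ → ℂ) → ℤ → SSRing n) (hh : IsH n h) (a : ℤ → ℂ) (p q : ℕ) :
    schurDet h a (hookP p (q + 1))
      = h a ((p : ℤ) + 1) * schurDet h (tauSeq a (-1)) (hookP 0 q)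
        - schurDet h (tauSeq a (-1)) (hookP (p + 1) q) := by
  obtain ⟨hneg, h0, -⟩ := hh
  rw [schurDet_eq_det h a _ (q + 1 + 1) (by rw [plen_hook]),
      schurDet_eq_det h _ (hookP 0 q) (q + 1) (plen_hook 0 q),
      schurDet_eq_det h _ (hookP (p + 1) q) (q + 1) (plen_hook (p + 1) q)]
  set M : Matrix (Fin (q + 1 + 1)) (Fin (q + 1 + 1)) (SSRing n) :=
    Matrix.of (fun i j : Fin (q + 1 + 1) =>
      h (tauSeq a (-(j : ℕ) : ℤ)) ((hookP p (q + 1) (i : ℕ) : ℤ) - (i : ℕ) + (j : ℕ))) with hM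
  rw [Matrix.det_succ_column_zero, Fin.sum_univ_succ, Fin.sum_univ_succ]
  have hentry : ∀ i j : Fin (q + 1 + 1), M i j
      = h (tauSeq a (-(j : ℕ) : ℤ)) ((hookP p (q + 1) (i : ℕ) : ℤ) - (i : ℕ) + (j : ℕ)) :=
    fun i j => rfl
  -- tail vanishes
  have htail : ∀ i : Fin q, M i.succ.succ 0 = 0 := by
    intro i
    rw [hentry]
    apply hneg
    have hlt : (i : ℕ) < q := i.isLt
    have hval : hookP p (q + 1) ((i.succ.succ : Fin (q + 1 + 1)) : ℕ) = 1 := by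
      simp only [hookP, Fin.val_succ]
      rw [if_neg (by omega), if_pos (by omega)]
    rw [hval]
    simp only [Fin.val_succ, Fin.val_zero]
    push_cast
    omega
  have hsum0 : ∑ i : Fin q,
      (-1 : SSRing n) ^ ((i.succ.succ : Fin (q + 1 + 1)) : ℕ) * M i.succ.succ 0 *
        (M.submatrix i.succ.succ.succAbove Fin.succ).det = 0 := by
    apply Finset.sum_eq_zero
    intro i _
    rw [htail i, mul_zero, zero_mul]
  -- entry (0,0)
  have h00 : M 0 0 = h a ((p : ℤ) + 1) := by
    rw [hentry]
    apply h_congr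
    · simp [tauSeq_zero]
    · simp [hookP]
  -- entry (1,0)
  have h10 : M 1 0 = 1 := by
    rw [hentry]
    have heq : h (tauSeq a (-((0 : Fin (q + 1 + 1)) : ℕ) : ℤ))
        ((hookP p (q + 1) ((1 : Fin (q + 1 + 1)) : ℕ) : ℤ) - ((1 : Fin (q + 1 + 1)) : ℕ)
          + ((0 : Fin (q + 1 + 1)) : ℕ))
        = h (tauSeq a (-((0 : Fin (q + 1 + 1)) : ℕ) : ℤ)) 0 := by
      apply h_congr h rfl
      have hv : hookP p (q + 1) ((1 : Fin (q + 1 + 1)) : ℕ) = 1 := by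
        simp [hookP]
      rw [hv]
      simp
    rw [heq, h0]
  -- minor at row 0
  have hminor0 : M.submatrix (Fin.succAbove 0) Fin.succ
      = Matrix.of (fun i j : Fin (q + 1) =>
          h (tauSeq (tauSeq a (-1)) (-(j : ℕ) : ℤ))
            ((hookP 0 q (i : ℕ) : ℤ) - (i : ℕ) + (j : ℕ))) := by
    refine Matrix.ext fun s t => ?_
    rw [Matrix.submatrix_apply, Fin.succAbove_zero, hentry, Matrix.of_apply]
    apply h_congr
    · rw [tauSeq_tauSeq]
      congr 1
      simp only [Fin.val_succ]
      push_cast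
      ring
    · have hs : hookP p (q + 1) ((s.succ : Fin (q + 1 + 1)) : ℕ) = 1 := by
        have := s.isLt
        simp only [hookP, Fin.val_succ]
        rw [if_neg (by omega), if_pos (by omega)]
      have ht : hookP 0 q ((s : ℕ)) = 1 := by
        have := s.isLt
        simp only [hookP]
        split_ifs with h1 h2
        · rfl
        · rfl
        · omega
      rw [hs, ht]
      simp only [Fin.val_succ]
      push_cast
      ring
  -- minor at row 1
  have hminor1 : M.submatrix (Fin.succAbove 1) Fin.succ
      = Matrix.of (fun i j : Fin (q + 1) =>
          h (tauSeq (tauSeq a (-1)) (-(j : ℕ) : ℤ))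
            ((hookP (p + 1) q (i : ℕ) : ℤ) - (i : ℕ) + (j : ℕ))) := by
    refine Matrix.ext fun s t => ?_
    rw [Matrix.submatrix_apply, Matrix.of_apply]
    refine Fin.cases ?_ ?_ s
    · rw [Fin.one_succAbove_zero, hentry]
      apply h_congr
      · rw [tauSeq_tauSeq]
        congr 1
        simp only [Fin.val_succ]
        push_cast
        ring
      · have hv0 : hookP p (q + 1) ((0 : Fin (q + 1 + 1)) : ℕ) = p + 1 := by
          simp [hookP]
        have hv0' : hookP (p + 1) q ((0 : Fin (q + 1)) : ℕ) = p + 2 := by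
          simp [hookP]
        rw [hv0, hv0']
        simp only [Fin.val_succ, Fin.val_zero]
        push_cast
        ring
    · intro s'
      rw [Fin.one_succAbove_succ, hentry]
      apply h_congr
      · rw [tauSeq_tauSeq]
        congr 1
        simp only [Fin.val_succ]
        push_cast
        ring
      · have := s'.isLt
        have hvA : hookP p (q + 1) ((s'.succ.succ : Fin (q + 1 + 1)) : ℕ) = 1 := by
          simp only [hookP, Fin.val_succ]
          rw [if_neg (by omega), if_pos (by omega)]
        have hvB : hookP (p + 1) q ((s'.succ : Fin (q + 1)) : ℕ) = 1 := by
          simp only [hookP, Fin.val_succ]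
          rw [if_neg (by omega), if_pos (by omega)]
        rw [hvA, hvB]
        simp only [Fin.val_succ]
        push_cast
        ring
  simp only [Fin.succ_zero_eq_one]
  rw [hsum0, h00, h10, hminor0, hminor1]
  simp only [Fin.val_zero, pow_zero, Fin.val_one, pow_one]
  ring

end HookAux
namespace HookAux
variable {n : ℕ}

lemma tauSeq_apply (a : ℤ → ℂ) (r i : ℤ) : tauSeq a r i = a (i + r) := rfl

lemma main_ind (h : (ℤ → ℂ) → ℤ → SSRing n) (hh : IsH n h) (q : ℕ) :
    ∀ (p : ℕ) (a : ℤ → ℂ),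
      schurDet h a (hookP (p + 1) q) + schurDet h a (hookP p (q + 1)) +
          MvPolynomial.C (a ((p : ℤ) + 1) - a (-(q : ℤ))) * schurDet h a (hookP p q)
        = h a ((p : ℤ) + 1) * schurDet h a (hookP 0 q) := by
  induction q with
  | zero =>
    intro p a
    have hK2 := h_tau_one h hh a ((p : ℤ) + 2)
    have hK1 : h (tauSeq a (-1)) 1 = h a 1 := by simpa using h_tau_one h hh a 1
    rw [hook_det_base h a (p + 1), hook_det_step h hh a p 0, hook_det_base h a p,
        hook_det_base h a 0, hook_det_base h (tauSeq a (-1)) 0,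
        hook_det_base h (tauSeq a (-1)) (p + 1)]
    simp only [map_sub] at hK2 ⊢
    push_cast at hK2 ⊢
    linear_combination (norm := ring_nf) (h a ((p : ℤ) + 1)) * hK1 - hK2
  | succ q ih =>
    intro p a
    have ih1 := ih (p + 1) (tauSeq a (-1))
    have ih2 := ih 0 (tauSeq a (-1))
    have hK2 := h_tau_one h hh a ((p : ℤ) + 2)
    have hK1 : h (tauSeq a (-1)) 1 = h a 1 := by simpa using h_tau_one h hh a 1
    rw [hook_det_step h hh a (p + 1) q, hook_det_step h hh a p (q + 1),
        hook_det_step h hh a p q, hook_det_step h hh a 0 q]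
    simp only [tauSeq_apply] at ih1 ih2
    simp only [map_sub] at ih1 ih2 hK2 ⊢
    push_cast at ih1 ih2 hK2 ⊢
    linear_combination (norm := ring_nf) (-1 : SSRing n) * ih1 + (h a ((p : ℤ) + 1)) * ih2
      - (schurDet h (tauSeq a (-1)) (hookP 0 q)) * hK2
      + (h a ((p : ℤ) + 1) * schurDet h (tauSeq a (-1)) (hookP 0 q)) * hK1

end HookAux
/-- For all `p, q ≥ 0`, every parameter sequence `a` and every `n ≥ 1`:
`s_{(p+1|q);a} + s_{(p|q+1);a} + (a_{p+1} + â_{q+1})·s_{(p|q);a} = s_{(p|0);a}·s_{(0|q);a}`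
as polynomials in `(x₁,…,xₙ;y₁,…,yₙ)`. -/
theorem hook_relation_multiparameter
    (p q : ℕ) (a : ℤ → ℂ) (n : ℕ) (hn : 1 ≤ n)
    (h : (ℤ → ℂ) → ℤ → SSRing n) (hh : IsH n h) :
    schurDet h a (hookP (p + 1) q) + schurDet h a (hookP p (q + 1)) +
        MvPolynomial.C (a ((p : ℤ) + 1) + adual a ((q : ℤ) + 1)) * schurDet h a (hookP p q) =
      schurDet h a (hookP p 0) * schurDet h a (hookP 0 q) := by
  have hm := HookAux.main_ind h hh q p a
  rw [HookAux.hook_det_base h a p]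
  simp only [adual, map_add, map_neg, map_sub] at hm ⊢
  linear_combination (norm := ring_nf) hm

end
end

section
/- Set e_{k;a} = s_{(1^k);a}, the multiparameter Schur polynomial of the column partition (1,1,…,1) with k parts. Then for every n ≥ 1 the following identity of formal power series in t holds: ∏_{i=1}^{n} (1+xᵢt)/(1−yᵢt) = 1 + Σ_{k≥1} e_{k;a}(x₁,…,xₙ;y₁,…,yₙ) · tᵏ / ∏_{i=1}^{k}(1−âᵢt), where â is the dual sequence. -/
open Finset

noncomputable section

/-- the column partition `(1^k)` -/
def columnP (k : ℕ) : ℕ → ℕ := fun i => if i < k then 1 else 0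

----------------------------------------------------------------
-- general power series lemmas
----------------------------------------------------------------
namespace EGen

open PowerSeries

variable {R : Type*} [CommRing R]

lemma constCoeff_prod_one_sub {ι : Type*} (s : Finset ι) (b : ι → R) :
    PowerSeries.constantCoeff (R := R) (∏ i ∈ s, (1 - PowerSeries.C (R := R) (b i) * PowerSeries.X)) = 1 := by
  rw [map_prod]
  refine Finset.prod_eq_one fun i _ => ?_
  simp

lemma coeff_one_sub_mul (b : R) (f : PowerSeries R) (m : ℕ) :
    PowerSeries.coeff (R := R) (m + 1) ((1 - PowerSeries.C (R := R) b * PowerSeries.X) * f)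
      = PowerSeries.coeff (R := R) (m + 1) f - b * PowerSeries.coeff (R := R) m f := by
  have : (1 - PowerSeries.C (R := R) b * PowerSeries.X) * f = f - PowerSeries.C (R := R) b * (PowerSeries.X * f) := by
    ring
  rw [this, map_sub, PowerSeries.coeff_C_mul, PowerSeries.coeff_succ_X_mul]

lemma coeff_prod_one_sub_eq_zero {ι : Type*} (s : Finset ι) (b : ι → R) :
    ∀ m : ℕ, s.card < m →
      PowerSeries.coeff (R := R) m (∏ i ∈ s, (1 - PowerSeries.C (R := R) (b i) * PowerSeries.X)) = 0 := by
  induction s using Finset.cons_induction with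
  | empty =>
    intro m hm
    simp only [Finset.prod_empty]
    rw [PowerSeries.coeff_one]
    have : m ≠ 0 := by omega
    simp [this]
  | cons i s hi ih =>
    intro m hm
    rw [Finset.prod_cons]
    rw [Finset.card_cons] at hm
    obtain ⟨m', rfl⟩ : ∃ m', m = m' + 1 := ⟨m - 1, by omega⟩
    rw [coeff_one_sub_mul]
    rw [ih _ (by omega), ih _ (by omega)]
    ring

lemma inv_unique {f u w : PowerSeries R} (h1 : f * u = 1) (h2 : f * w = 1) : u = w := by
  calc u = u * (f * w) := by rw [h2, mul_one]
  _ = (f * u) * w := by ring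
  _ = w := by rw [h1, one_mul]

lemma prod_mul_denomInv (b : ℕ → R) (k : ℕ) :
    (∏ i ∈ Finset.range k, (1 - PowerSeries.C (R := R) (b i) * PowerSeries.X)) * denomInv R b k = 1 :=
  PowerSeries.mul_invOfUnit _ 1 (by rw [constCoeff_prod_one_sub]; rfl)

lemma constCoeff_denomInv (b : ℕ → R) (k : ℕ) :
    PowerSeries.constantCoeff (R := R) (denomInv R b k) = 1 := by
  rw [denomInv, PowerSeries.constantCoeff_invOfUnit]; rfl

lemma coeff_mul_range (f g : PowerSeries R) (N : ℕ) :
    PowerSeries.coeff (R := R) N (f * g)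
      = ∑ m ∈ Finset.range (N + 1), PowerSeries.coeff (R := R) m f * PowerSeries.coeff (R := R) (N - m) g := by
  rw [PowerSeries.coeff_mul]
  exact Finset.Nat.sum_antidiagonal_eq_sum_range_succ_mk _ N

end EGen
namespace EGen
open PowerSeries
variable {R : Type*} [CommRing R]

/-- From the expansion property, a closed formula for the coefficients. -/
lemma cf_of_exp {Φ : PowerSeries R} {b : ℕ → R} {c : ℕ → R}
    (hexp : ∀ N : ℕ, PowerSeries.coeff (R := R) N Φ
      = ∑ k ∈ Finset.range (N + 1), c k * PowerSeries.coeff (R := R) (N - k) (denomInv R b k))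
    (k : ℕ) :
    c k = PowerSeries.coeff (R := R) k
      ((∏ i ∈ Finset.range (k - 1), (1 - PowerSeries.C (R := R) (b i) * PowerSeries.X)) * Φ) := by
  set P : PowerSeries R := ∏ i ∈ Finset.range (k - 1), (1 - PowerSeries.C (R := R) (b i) * PowerSeries.X)
    with hP
  have step1 : PowerSeries.coeff (R := R) k (P * Φ)
      = ∑ u ∈ Finset.range (k + 1), c u * PowerSeries.coeff (R := R) (k - u) (P * denomInv R b u) := by
    rw [coeff_mul_range]
    have : ∀ m ∈ Finset.range (k + 1),
        PowerSeries.coeff (R := R) m P * PowerSeries.coeff (R := R) (k - m) Φ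
          = ∑ u ∈ Finset.range (k - m + 1),
              PowerSeries.coeff (R := R) m P * (c u * PowerSeries.coeff (R := R) (k - m - u) (denomInv R b u)) := by
      intro m _
      rw [hexp (k - m), Finset.mul_sum]
    rw [Finset.sum_congr rfl this]
    rw [Finset.sum_comm' (t' := Finset.range (k + 1))
      (s' := fun u => Finset.range (k - u + 1)) (by
        intro m u
        simp only [Finset.mem_range]
        omega)]
    refine Finset.sum_congr rfl fun u hu => ?_
    rw [coeff_mul_range]
    simp only [Finset.mem_range] at hu
    rw [Finset.mul_sum]
    have hrw : Finset.range (k - u + 1) = Finset.range (k + 1 - u) := by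
      congr 1; omega
    rw [hrw]
    refine Finset.sum_congr rfl fun m hm => ?_
    simp only [Finset.mem_range] at hm
    have : k - m - u = k - u - m := by omega
    rw [this]; ring
  rw [step1]
  have hzero : ∀ u ∈ Finset.range (k + 1), u ≠ k →
      c u * PowerSeries.coeff (R := R) (k - u) (P * denomInv R b u) = 0 := by
    intro u hu hne
    simp only [Finset.mem_range] at hu
    have hu' : u ≤ k - 1 := by omega
    have hsplit : P = (∏ i ∈ Finset.range u, (1 - PowerSeries.C (R := R) (b i) * PowerSeries.X))
        * ∏ i ∈ Finset.Ico u (k - 1), (1 - PowerSeries.C (R := R) (b i) * PowerSeries.X) := by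
      rw [hP, Finset.range_eq_Ico, ← Finset.prod_Ico_consecutive _ (Nat.zero_le u) hu',
        ← Finset.range_eq_Ico]
    have : P * denomInv R b u
        = ∏ i ∈ Finset.Ico u (k - 1), (1 - PowerSeries.C (R := R) (b i) * PowerSeries.X) := by
      rw [hsplit]
      calc (∏ i ∈ Finset.range u, (1 - PowerSeries.C (R := R) (b i) * PowerSeries.X))
            * (∏ i ∈ Finset.Ico u (k-1), (1 - PowerSeries.C (R := R) (b i) * PowerSeries.X))
            * denomInv R b u
          = ((∏ i ∈ Finset.range u, (1 - PowerSeries.C (R := R) (b i) * PowerSeries.X)) * denomInv R b u)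
            * ∏ i ∈ Finset.Ico u (k-1), (1 - PowerSeries.C (R := R) (b i) * PowerSeries.X) := by ring
        _ = _ := by rw [prod_mul_denomInv, one_mul]
    rw [this, coeff_prod_one_sub_eq_zero _ _ _ (by rw [Nat.card_Ico]; omega), mul_zero]
  rw [Finset.sum_eq_single_of_mem k (Finset.self_mem_range_succ k) hzero]
  have : PowerSeries.coeff (R := R) (k - k) (P * denomInv R b k) = 1 := by
    simp only [Nat.sub_self]
    rw [PowerSeries.coeff_zero_eq_constantCoeff_apply, map_mul, constCoeff_denomInv, hP,
      constCoeff_prod_one_sub, one_mul]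
  rw [this, mul_one]

end EGen

namespace EGen
open PowerSeries
variable {R : Type*} [CommRing R]

/-- The key staircase-telescoping identity. -/
lemma stair (G' F' : PowerSeries R) (hFG : G' * F' = 1) (γ : ℕ → R) (j : ℕ) (hj : 1 ≤ j) :
    ∑ l ∈ Finset.range (j + 1),
      PowerSeries.coeff (R := R) l ((∏ t ∈ Finset.Ico 1 l, (1 - PowerSeries.C (R := R) (γ t) * PowerSeries.X)) * G') *
      PowerSeries.coeff (R := R) (j - l)
        ((∏ t ∈ Finset.Ico (l + 1) j, (1 - PowerSeries.C (R := R) (γ t) * PowerSeries.X)) * F') = 0 := by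
  set Φ : ℕ → PowerSeries R :=
    fun l => (∏ t ∈ Finset.Ico 1 l, (1 - PowerSeries.C (R := R) (γ t) * PowerSeries.X)) * G' with hΦ
  set Ψ : ℕ → PowerSeries R :=
    fun l => (∏ t ∈ Finset.Ico (l + 1) j, (1 - PowerSeries.C (R := R) (γ t) * PowerSeries.X)) * F' with hΨ
  set s : ℕ → R := fun l => PowerSeries.coeff (R := R) l (Φ l) * PowerSeries.coeff (R := R) (j - l) (Ψ l) with hs
  set E : ℕ → R := fun l =>
    ∑ m ∈ Finset.range l, PowerSeries.coeff (R := R) m (Φ l) * PowerSeries.coeff (R := R) (j - m) (Ψ (l - 1))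
    with hE
  have hΦsucc : ∀ l, 1 ≤ l →
      Φ (l + 1) = (1 - PowerSeries.C (R := R) (γ l) * PowerSeries.X) * Φ l := by
    intro l hl
    simp only [hΦ]
    rw [Finset.prod_Ico_succ_top hl]
    ring
  have hΨpred : ∀ l, 1 ≤ l → l < j →
      Ψ (l - 1) = (1 - PowerSeries.C (R := R) (γ l) * PowerSeries.X) * Ψ l := by
    intro l hl hlj
    simp only [hΨ]
    have h1 : l - 1 + 1 = l := by omega
    rw [h1, Finset.prod_eq_prod_Ico_succ_bot hlj]
    ring
  have hΦ10 : Φ 1 = Φ 0 := by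
    simp only [hΦ]
    rw [Finset.Ico_self, Finset.Ico_eq_empty (by omega)]
  have hΨj : Ψ j = Ψ (j - 1) := by
    simp only [hΨ]
    have : j - 1 + 1 = j := by omega
    rw [this, Finset.Ico_self, Finset.Ico_eq_empty (by omega)]
  -- full convolution vanishes
  have hconv : ∀ l, 1 ≤ l → l ≤ j →
      ∑ m ∈ Finset.range (j + 1),
        PowerSeries.coeff (R := R) m (Φ l) * PowerSeries.coeff (R := R) (j - m) (Ψ (l - 1)) = 0 := by
    intro l hl hlj
    rw [← coeff_mul_range]
    have hprod : Φ l * Ψ (l - 1)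
        = ∏ t ∈ Finset.Ico 1 j, (1 - PowerSeries.C (R := R) (γ t) * PowerSeries.X) := by
      simp only [hΦ, hΨ]
      have h1 : l - 1 + 1 = l := by omega
      rw [h1]
      calc (∏ t ∈ Finset.Ico 1 l, (1 - PowerSeries.C (R := R) (γ t) * PowerSeries.X)) * G' *
            ((∏ t ∈ Finset.Ico l j, (1 - PowerSeries.C (R := R) (γ t) * PowerSeries.X)) * F')
          = ((∏ t ∈ Finset.Ico 1 l, (1 - PowerSeries.C (R := R) (γ t) * PowerSeries.X)) *
             ∏ t ∈ Finset.Ico l j, (1 - PowerSeries.C (R := R) (γ t) * PowerSeries.X)) * (G' * F') := by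
            ring
        _ = _ := by rw [hFG, mul_one, Finset.prod_Ico_consecutive _ hl hlj]
    rw [hprod]
    exact coeff_prod_one_sub_eq_zero _ _ _ (by rw [Nat.card_Ico]; omega)
  -- E 1 = s 0
  have hE1 : E 1 = s 0 := by
    simp only [hE, hs, Finset.sum_range_one, hΦ10]
  -- E (l+1) = E l + s l  for 1 ≤ l ≤ j - 1
  have hstep : ∀ l, 1 ≤ l → l < j → E (l + 1) = E l + s l := by
    intro l hl hlj
    set S0 : R := ∑ m ∈ Finset.range l,
      PowerSeries.coeff (R := R) m (Φ l) * PowerSeries.coeff (R := R) (j - m) (Ψ l) with hS0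
    set S1 : R := ∑ m ∈ Finset.range l,
      PowerSeries.coeff (R := R) (m + 1) (Φ l) * PowerSeries.coeff (R := R) (j - m - 1) (Ψ l) with hS1
    set Sg : R := ∑ m ∈ Finset.range l,
      PowerSeries.coeff (R := R) m (Φ l) * PowerSeries.coeff (R := R) (j - m - 1) (Ψ l) with hSg
    set c0 : R := PowerSeries.coeff (R := R) 0 (Φ l) * PowerSeries.coeff (R := R) j (Ψ l) with hc0
    have hEl1 : E (l + 1) = S1 - γ l * Sg + c0 := by
      simp only [hE]
      have hl1 : l + 1 - 1 = l := by omega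
      rw [hl1, Finset.sum_range_succ']
      have hterm : ∀ m ∈ Finset.range l,
          PowerSeries.coeff (R := R) (m + 1) (Φ (l + 1)) * PowerSeries.coeff (R := R) (j - (m + 1)) (Ψ l)
          = PowerSeries.coeff (R := R) (m + 1) (Φ l) * PowerSeries.coeff (R := R) (j - m - 1) (Ψ l)
            - γ l * (PowerSeries.coeff (R := R) m (Φ l) * PowerSeries.coeff (R := R) (j - m - 1) (Ψ l)) := by
        intro m hm
        rw [hΦsucc l hl, coeff_one_sub_mul]
        have : j - (m + 1) = j - m - 1 := by omega
        rw [this]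
        ring
      rw [Finset.sum_congr rfl hterm, Finset.sum_sub_distrib, ← Finset.mul_sum]
      have hz : PowerSeries.coeff (R := R) 0 (Φ (l + 1)) * PowerSeries.coeff (R := R) (j - 0) (Ψ l) = c0 := by
        rw [hΦsucc l hl, hc0, Nat.sub_zero]
        congr 1
        rw [PowerSeries.coeff_zero_eq_constantCoeff_apply, map_mul,
          PowerSeries.coeff_zero_eq_constantCoeff_apply]
        simp
      rw [hz, ← hS1, ← hSg]
    have hEl : E l = S0 - γ l * Sg := by
      simp only [hE]
      have hterm : ∀ m ∈ Finset.range l,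
          PowerSeries.coeff (R := R) m (Φ l) * PowerSeries.coeff (R := R) (j - m) (Ψ (l - 1))
          = PowerSeries.coeff (R := R) m (Φ l) * PowerSeries.coeff (R := R) (j - m) (Ψ l)
            - γ l * (PowerSeries.coeff (R := R) m (Φ l) * PowerSeries.coeff (R := R) (j - m - 1) (Ψ l)) := by
        intro m hm
        simp only [Finset.mem_range] at hm
        have hc := coeff_one_sub_mul (γ l) (Ψ l) (j - m - 1)
        have hjm : j - m - 1 + 1 = j - m := by omega
        rw [hjm] at hc
        rw [hΨpred l hl hlj, hc]
        ring
      rw [Finset.sum_congr rfl hterm, Finset.sum_sub_distrib, ← Finset.mul_sum, ← hS0, ← hSg]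
    have hkey : c0 + S1 = S0 + s l := by
      have hsplit := Finset.sum_range_succ' (fun m =>
        PowerSeries.coeff (R := R) m (Φ l) * PowerSeries.coeff (R := R) (j - m) (Ψ l)) l
      rw [Finset.sum_range_succ] at hsplit
      have h2 : ∀ m ∈ Finset.range l,
          PowerSeries.coeff (R := R) (m + 1) (Φ l) * PowerSeries.coeff (R := R) (j - (m + 1)) (Ψ l)
          = PowerSeries.coeff (R := R) (m + 1) (Φ l) * PowerSeries.coeff (R := R) (j - m - 1) (Ψ l) := by
        intro m hm
        have : j - (m + 1) = j - m - 1 := by omega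
        rw [this]
      rw [Finset.sum_congr rfl h2] at hsplit
      simp only [Nat.sub_zero] at hsplit
      rw [← hS0, ← hS1] at hsplit
      simp only [hs, hc0]
      linear_combination -hsplit
    rw [hEl1, hEl]
    linear_combination hkey
  -- s j = - E j
  have hsj : s j = - E j := by
    have h0 := hconv j hj le_rfl
    rw [Finset.sum_range_succ, Nat.sub_self] at h0
    have hEj : E j = ∑ m ∈ Finset.range j,
        PowerSeries.coeff (R := R) m (Φ j) * PowerSeries.coeff (R := R) (j - m) (Ψ (j - 1)) := by
      simp only [hE]
    have hsval : s j = PowerSeries.coeff (R := R) j (Φ j) * PowerSeries.coeff (R := R) 0 (Ψ (j - 1)) := by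
      simp only [hs, Nat.sub_self, hΨj]
    rw [hsval, hEj]
    linear_combination h0
  -- telescope
  obtain ⟨p, rfl⟩ : ∃ p, j = p + 1 := ⟨j - 1, by omega⟩
  rw [Finset.sum_range_succ, Finset.sum_range_succ']
  have hmid : ∑ m ∈ Finset.range p, s (m + 1) = E (p + 1) - E 1 := by
    have hterm : ∀ m ∈ Finset.range p, s (m + 1) = E (m + 1 + 1) - E (m + 1) := by
      intro m hm
      simp only [Finset.mem_range] at hm
      rw [hstep (m + 1) (by omega) (by omega)]
      ring
    rw [Finset.sum_congr rfl hterm]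
    exact Finset.sum_range_sub (fun m => E (m + 1)) p
  rw [hmid, hE1]
  have h1 : (PowerSeries.coeff (R := R) 0) (Φ 0) * (PowerSeries.coeff (R := R) (p + 1 - 0)) (Ψ 0) = s 0 := rfl
  have h2 : (PowerSeries.coeff (R := R) (p + 1)) (Φ (p + 1)) *
      (PowerSeries.coeff (R := R) (p + 1 - (p + 1))) (Ψ (p + 1)) = s (p + 1) := rfl
  rw [h1, h2, hsj]
  ring

end EGen

namespace EGen
open PowerSeries
variable {R : Type*} [CommRing R]

/-- If `v ᵥ* T = e₀` and `det T = 1`, the minor deleting the last row and first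
column has determinant `(-1)^k v_k`. -/
lemma det_minor_of_vecMul_single {k : ℕ} (T : Matrix (Fin (k + 1)) (Fin (k + 1)) R)
    (hdet : T.det = 1) (v : Fin (k + 1) → R) (hv : Matrix.vecMul v T = Pi.single 0 1) :
    Matrix.det (Matrix.of fun i j : Fin k => T i.castSucc j.succ)
      = (-1 : R) ^ k * v (Fin.last k) := by
  have hu : IsUnit T.det := by rw [hdet]; exact isUnit_one
  have hvv : v = Matrix.vecMul (Pi.single 0 1) T⁻¹ := by
    rw [← hv, Matrix.vecMul_vecMul, Matrix.mul_nonsing_inv T hu, Matrix.vecMul_one]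
  have hlast : v (Fin.last k) = T⁻¹ 0 (Fin.last k) := by
    rw [hvv, Matrix.single_one_vecMul]; rfl
  have hinv : T⁻¹ 0 (Fin.last k) = T.adjugate 0 (Fin.last k) := by
    rw [Matrix.inv_def, hdet, Ring.inverse_one, one_smul]
  have hadj : T.adjugate 0 (Fin.last k)
      = (T.updateRow (Fin.last k) (Pi.single 0 1)).det := Matrix.adjugate_apply T 0 (Fin.last k)
  have hexpand : (T.updateRow (Fin.last k) (Pi.single 0 1)).det
      = (-1 : R) ^ k * Matrix.det (Matrix.of fun i j : Fin k => T i.castSucc j.succ) := by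
    rw [Matrix.det_succ_row _ (Fin.last k)]
    rw [Fintype.sum_eq_single (0 : Fin (k + 1)) ?side]
    · rw [Matrix.updateRow_self]
      have h1 : Pi.single (M := fun _ : Fin (k + 1) => R) 0 1 0 = 1 := by simp
      rw [h1, mul_one]
      have h2 : ((T.updateRow (Fin.last k) (Pi.single 0 1)).submatrix
          (Fin.last k).succAbove (0 : Fin (k + 1)).succAbove)
          = Matrix.of fun i j : Fin k => T i.castSucc j.succ := by
        ext i j
        rw [Matrix.submatrix_apply, Fin.succAbove_last, Fin.succAbove_zero]
        rw [Matrix.updateRow_ne (Fin.ne_of_lt (Fin.castSucc_lt_last i))]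
        rfl
      rw [h2]
      simp [Fin.val_last]
    · intro j hj
      rw [Matrix.updateRow_self, Pi.single_eq_of_ne hj, mul_zero, zero_mul]
  rw [hexpand] at hadj
  rw [hlast, hinv, hadj, ← mul_assoc]
  have : (-1 : R) ^ k * (-1 : R) ^ k = 1 := by
    rw [← pow_add, ← two_mul, pow_mul]
    norm_num
  rw [this, one_mul]

end EGen

namespace EGen
open PowerSeries
variable {R : Type*} [CommRing R]

lemma one_add_C_mul_X (c : R) :
    (1 + PowerSeries.C (R := R) c * PowerSeries.X) = (1 - PowerSeries.C (R := R) (-c) * PowerSeries.X) := by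
  rw [map_neg]; ring

lemma coeff_one_add_C_mul_X (c : R) (m : ℕ) :
    PowerSeries.coeff (R := R) m (1 + PowerSeries.C (R := R) c * PowerSeries.X)
      = if m = 0 then 1 else if m = 1 then c else 0 := by
  rw [map_add, PowerSeries.coeff_one, PowerSeries.coeff_C_mul, PowerSeries.coeff_X]
  match m with
  | 0 => simp
  | 1 => simp
  | (m + 2) => simp

lemma rescale_one_add (r c : R) :
    PowerSeries.rescale r (1 + PowerSeries.C (R := R) c * PowerSeries.X)
      = 1 + PowerSeries.C (R := R) (r * c) * PowerSeries.X := by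
  ext m
  rw [PowerSeries.coeff_rescale, coeff_one_add_C_mul_X, coeff_one_add_C_mul_X]
  match m with
  | 0 => simp
  | 1 => simp [mul_comm]
  | (m + 2) => simp

lemma rescale_neg_one_sub (c : R) :
    PowerSeries.rescale (-1 : R) (1 - PowerSeries.C (R := R) c * PowerSeries.X)
      = 1 + PowerSeries.C (R := R) c * PowerSeries.X := by
  have h1 : (1 - PowerSeries.C (R := R) c * PowerSeries.X) = 1 + PowerSeries.C (R := R) (-c) * PowerSeries.X := by
    rw [map_neg]; ring
  rw [h1, rescale_one_add]
  norm_num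

lemma rescale_neg_one_add (c : R) :
    PowerSeries.rescale (-1 : R) (1 + PowerSeries.C (R := R) c * PowerSeries.X)
      = 1 - PowerSeries.C (R := R) c * PowerSeries.X := by
  rw [rescale_one_add, neg_one_mul, map_neg]
  ring

end EGen

----------------------------------------------------------------
-- main theorem
----------------------------------------------------------------

open EGen in
set_option maxHeartbeats 2000000 in
/-- With `e_{k;a} = s_{(1^k);a}`, for every `n ≥ 1` the identity of formal
power series in `t`:
`∏_{i=1}^{n} (1+xᵢt)/(1-yᵢt) = 1 + ∑_{k≥1} e_{k;a}(x;y)·tᵏ/∏_{i=1}^{k}(1-âᵢt)`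
(stated coefficientwise, the `k = 0` term of the right-hand side being `1`). -/
theorem e_generating_series
    (a : ℤ → ℂ) (n : ℕ) (hn : 1 ≤ n)
    (h : (ℤ → ℂ) → ℤ → SSRing n) (hh : IsH n h) :
    (∏ i : Fin n,
        (1 + PowerSeries.C (R := SSRing n) (MvPolynomial.X (Sum.inl i)) * PowerSeries.X)) *
      PowerSeries.invOfUnit
        (∏ i : Fin n,
          (1 - PowerSeries.C (R := SSRing n) (MvPolynomial.X (Sum.inr i)) * PowerSeries.X)) 1 =
    PowerSeries.mk (fun N =>
      ∑ k ∈ Finset.range (N + 1),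
        schurDet h a (columnP k) *
          PowerSeries.coeff (R := SSRing n) (N - k)
            (denomInv (SSRing n) (fun i => MvPolynomial.C (adual a ((i : ℤ) + 1))) k)) := by
  classical
  obtain ⟨hneg, h00, hgen⟩ := hh
  -- the four polynomial products
  set A : PowerSeries (SSRing n) :=
    ∏ i : Fin n, (1 + PowerSeries.C (R := SSRing n) (MvPolynomial.X (Sum.inl i)) * PowerSeries.X) with hA
  set B : PowerSeries (SSRing n) :=
    ∏ i : Fin n, (1 - PowerSeries.C (R := SSRing n) (MvPolynomial.X (Sum.inr i)) * PowerSeries.X) with hB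
  set A' : PowerSeries (SSRing n) :=
    ∏ i : Fin n, (1 - PowerSeries.C (R := SSRing n) (MvPolynomial.X (Sum.inl i)) * PowerSeries.X) with hA'
  set B' : PowerSeries (SSRing n) :=
    ∏ i : Fin n, (1 + PowerSeries.C (R := SSRing n) (MvPolynomial.X (Sum.inr i)) * PowerSeries.X) with hB'
  set G : PowerSeries (SSRing n) := A * PowerSeries.invOfUnit B 1 with hG
  have hFdef : hGenSeries n = B' * PowerSeries.invOfUnit A' 1 := rfl
  set F : PowerSeries (SSRing n) := hGenSeries n with hF
  -- constant coefficients
  have hcB : PowerSeries.constantCoeff (R := SSRing n) B = 1 := by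
    rw [hB, map_prod]; exact Finset.prod_eq_one fun i _ => by simp
  have hcA' : PowerSeries.constantCoeff (R := SSRing n) A' = 1 := by
    rw [hA', map_prod]; exact Finset.prod_eq_one fun i _ => by simp
  have hBinv : B * PowerSeries.invOfUnit B 1 = 1 :=
    PowerSeries.mul_invOfUnit _ _ (by rw [hcB]; rfl)
  have hA'inv : A' * PowerSeries.invOfUnit A' 1 = 1 :=
    PowerSeries.mul_invOfUnit _ _ (by rw [hcA']; rfl)
  -- G⁻ = rescale (-1) G and F * G⁻ = 1
  set Gm : PowerSeries (SSRing n) := PowerSeries.rescale (-1) G with hGm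
  have hresA : PowerSeries.rescale (-1 : (SSRing n)) A = A' := by
    rw [hA, hA', map_prod]
    exact Finset.prod_congr rfl fun i _ => rescale_neg_one_add _
  have hresB : PowerSeries.rescale (-1 : (SSRing n)) B = B' := by
    rw [hB, hB', map_prod]
    exact Finset.prod_congr rfl fun i _ => rescale_neg_one_sub _
  have hB'resinv : B' * PowerSeries.rescale (-1) (PowerSeries.invOfUnit B 1) = 1 := by
    rw [← hresB, ← map_mul, hBinv, map_one]
  have hGmF : Gm * F = 1 := by
    rw [hGm, hG, map_mul, hresA, hFdef]
    calc A' * PowerSeries.rescale (-1) (PowerSeries.invOfUnit B 1) *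
          (B' * PowerSeries.invOfUnit A' 1)
        = (A' * PowerSeries.invOfUnit A' 1) *
          (B' * PowerSeries.rescale (-1) (PowerSeries.invOfUnit B 1)) := by ring
      _ = 1 := by rw [hA'inv, hB'resinv, one_mul]
  -- the swap ring hom
  set σr : (SSRing n) →+* (SSRing n) :=
    (MvPolynomial.rename (Sum.swap : Fin n ⊕ Fin n → Fin n ⊕ Fin n)).toRingHom with hσr
  have hσC : ∀ z : ℂ, σr (MvPolynomial.C z) = MvPolynomial.C z := fun z =>
    MvPolynomial.rename_C _ z
  have hσF : PowerSeries.map σr F = G := by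
    rw [hFdef, map_mul]
    have h1 : PowerSeries.map σr B' = A := by
      rw [hB', hA, map_prod]
      refine Finset.prod_congr rfl fun i _ => ?_
      rw [map_add, map_one, map_mul, PowerSeries.map_C, PowerSeries.map_X]
      rw [show σr (MvPolynomial.X (Sum.inr i)) = MvPolynomial.X (Sum.inl i) from
        MvPolynomial.rename_X _ _]
    have h2 : PowerSeries.map σr A' = B := by
      rw [hA', hB, map_prod]
      refine Finset.prod_congr rfl fun i _ => ?_
      rw [map_sub, map_one, map_mul, PowerSeries.map_C, PowerSeries.map_X]
      rw [show σr (MvPolynomial.X (Sum.inl i)) = MvPolynomial.X (Sum.inr i) from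
        MvPolynomial.rename_X _ _]
    have h3 : PowerSeries.map σr (PowerSeries.invOfUnit A' 1) = PowerSeries.invOfUnit B 1 := by
      refine inv_unique (f := B) ?_ hBinv
      rw [← h2, ← map_mul, hA'inv, map_one]
    rw [h1, h3, hG]
  -- denomInv is fixed by σr
  have hσdenom : ∀ (c : ℕ → ℂ) (k : ℕ),
      PowerSeries.map σr (denomInv (SSRing n) (fun i => MvPolynomial.C (c i)) k)
        = denomInv (SSRing n) (fun i => MvPolynomial.C (c i)) k := by
    intro c k
    refine inv_unique (f := ∏ i ∈ Finset.range k,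
      (1 - PowerSeries.C (R := SSRing n) (MvPolynomial.C (c i)) * PowerSeries.X)) ?_ (prod_mul_denomInv _ _)
    have hfix : PowerSeries.map σr (∏ i ∈ Finset.range k,
        (1 - PowerSeries.C (R := SSRing n) (MvPolynomial.C (c i)) * PowerSeries.X))
        = ∏ i ∈ Finset.range k, (1 - PowerSeries.C (R := SSRing n) (MvPolynomial.C (c i)) * PowerSeries.X) := by
      rw [map_prod]
      refine Finset.prod_congr rfl fun i _ => ?_
      rw [map_sub, map_one, map_mul, PowerSeries.map_C, PowerSeries.map_X, hσC]
    calc (∏ i ∈ Finset.range k, (1 - PowerSeries.C (R := SSRing n) (MvPolynomial.C (c i)) * PowerSeries.X)) *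
          PowerSeries.map σr (denomInv (SSRing n) (fun i => MvPolynomial.C (c i)) k)
        = PowerSeries.map σr ((∏ i ∈ Finset.range k,
            (1 - PowerSeries.C (R := SSRing n) (MvPolynomial.C (c i)) * PowerSeries.X)) *
            denomInv (SSRing n) (fun i => MvPolynomial.C (c i)) k) := by rw [map_mul, hfix]
      _ = 1 := by rw [prod_mul_denomInv]; exact map_one _
  -- coefficientwise expansions of F at each shift
  have hexpF : ∀ s : ℤ, ∀ N : ℕ, PowerSeries.coeff (R := SSRing n) N F
      = ∑ k ∈ Finset.range (N + 1), h (tauSeq a s) k *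
          PowerSeries.coeff (R := SSRing n) (N - k)
            (denomInv (SSRing n) (fun i => MvPolynomial.C (tauSeq a s ((i : ℤ) + 1))) k) := by
    intro s N
    have := congrArg (PowerSeries.coeff (R := SSRing n) N) (hgen (tauSeq a s))
    rw [PowerSeries.coeff_mk] at this
    exact this
  -- closed formula for the h coefficients
  have cfH : ∀ (s : ℤ) (m : ℕ), h (tauSeq a s) (m : ℤ)
      = PowerSeries.coeff (R := SSRing n) m ((∏ i ∈ Finset.range (m - 1),
          (1 - PowerSeries.C (R := SSRing n) (MvPolynomial.C (tauSeq a s ((i : ℤ) + 1))) * PowerSeries.X)) * F) := by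
    intro s m
    exact cf_of_exp (c := fun k : ℕ => h (tauSeq a s) (k : ℤ)) (hexpF s) m
  -- the dual family
  set Et : ℕ → (SSRing n) := fun k => σr (h (adual a) (k : ℤ)) with hEt
  have hexpG : ∀ N : ℕ, PowerSeries.coeff (R := SSRing n) N G
      = ∑ k ∈ Finset.range (N + 1), Et k *
          PowerSeries.coeff (R := SSRing n) (N - k)
            (denomInv (SSRing n) (fun i => MvPolynomial.C (adual a ((i : ℤ) + 1))) k) := by
    intro N
    have h1 := congrArg (fun φ => PowerSeries.coeff (R := SSRing n) N (PowerSeries.map σr φ)) (hgen (adual a))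
    rw [PowerSeries.coeff_map, PowerSeries.coeff_map, PowerSeries.coeff_mk] at h1
    rw [← PowerSeries.coeff_map, hσF] at h1
    rw [h1, map_sum]
    refine Finset.sum_congr rfl fun k _ => ?_
    rw [map_mul]
    congr 1
    rw [← PowerSeries.coeff_map, hσdenom (fun i => adual a ((i : ℤ) + 1))]
  -- closed formula for Et
  have cfE : ∀ m : ℕ, Et m
      = PowerSeries.coeff (R := SSRing n) m ((∏ i ∈ Finset.range (m - 1),
          (1 - PowerSeries.C (R := SSRing n) (MvPolynomial.C (adual a ((i : ℤ) + 1))) * PowerSeries.X)) * G) :=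
    fun m => cf_of_exp (c := Et) hexpG m
  -- Et in terms of Gm
  have cfE' : ∀ m : ℕ, ((-1 : (SSRing n)) ^ m) * Et m
      = PowerSeries.coeff (R := SSRing n) m ((∏ t ∈ Finset.Ico 1 m,
          (1 - PowerSeries.C (R := SSRing n) (MvPolynomial.C (a (1 - (t : ℤ)))) * PowerSeries.X)) * Gm) := by
    intro m
    have hIco : (∏ t ∈ Finset.Ico 1 m,
        (1 - PowerSeries.C (R := SSRing n) (MvPolynomial.C (a (1 - (t : ℤ)))) * PowerSeries.X))
        = ∏ i ∈ Finset.range (m - 1),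
            (1 - PowerSeries.C (R := SSRing n) (MvPolynomial.C (a (-(i : ℤ)))) * PowerSeries.X) := by
      rw [Finset.prod_Ico_eq_prod_range]
      refine Finset.prod_congr rfl fun i _ => ?_
      congr 3
      push_cast
      ring
    have hres : (∏ i ∈ Finset.range (m - 1),
        (1 - PowerSeries.C (R := SSRing n) (MvPolynomial.C (a (-(i : ℤ)))) * PowerSeries.X)) * Gm
        = PowerSeries.rescale (-1) ((∏ i ∈ Finset.range (m - 1),
            (1 + PowerSeries.C (R := SSRing n) (MvPolynomial.C (a (-(i : ℤ)))) * PowerSeries.X)) * G) := by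
      rw [map_mul, map_prod, ← hGm]
      exact congrArg (· * Gm) (Finset.prod_congr rfl fun i _ => (rescale_neg_one_add _).symm)
    have hdualfac : ∀ i : ℕ,
        (1 - PowerSeries.C (R := SSRing n) (MvPolynomial.C (adual a ((i : ℤ) + 1))) * PowerSeries.X)
          = (1 + PowerSeries.C (R := SSRing n) (MvPolynomial.C (a (-(i : ℤ)))) * PowerSeries.X) := by
      intro i
      have : adual a ((i : ℤ) + 1) = -a (-(i : ℤ)) := by
        unfold adual
        congr 1
        ring
      rw [this, map_neg, map_neg]
      ring
    have hpe : (∏ i ∈ Finset.range (m - 1),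
        (1 - PowerSeries.C (R := SSRing n) (MvPolynomial.C (adual a ((i : ℤ) + 1))) * PowerSeries.X))
        = ∏ i ∈ Finset.range (m - 1),
            (1 + PowerSeries.C (R := SSRing n) (MvPolynomial.C (a (-(i : ℤ)))) * PowerSeries.X) :=
      Finset.prod_congr rfl fun i _ => hdualfac i
    rw [hIco, hres, PowerSeries.coeff_rescale, cfE m, hpe]
  -- Main claim: schurDet = Et
  have key : ∀ k : ℕ, schurDet h a (columnP k) = Et k := by
    intro k
    have hplen : plen (columnP k) = k := by
      have e : {i : ℕ // 0 < columnP k i} ≃ Fin k :=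
        { toFun := fun x => ⟨x.1, by
            have := x.2
            unfold columnP at this
            by_contra hc
            rw [if_neg (by omega)] at this
            exact absurd this (by omega)⟩
          invFun := fun m => ⟨m.1, by
            unfold columnP
            rw [if_pos m.2]
            omega⟩
          left_inv := fun x => rfl
          right_inv := fun m => rfl }
      rw [plen, Nat.card_congr e, Nat.card_eq_fintype_card, Fintype.card_fin]
    match k with
    | 0 =>
      have : Et 0 = 1 := by
        rw [hEt]
        simp only [Nat.cast_zero]
        rw [h00, map_one]
      rw [this]
      unfold schurDet
      haveI : IsEmpty (Fin (plen (columnP 0))) := by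
        rw [hplen]
        exact Fin.isEmpty
      exact Matrix.det_isEmpty
    | (kp + 1) =>
      set k := kp + 1
      -- the big matrix
      set Tm : Matrix (Fin (k + 1)) (Fin (k + 1)) (SSRing n) :=
        Matrix.of fun i j => h (tauSeq a (1 - (j : ℤ))) ((j : ℤ) - (i : ℤ)) with hTm
      have hTdet : Tm.det = 1 := by
        rw [Matrix.det_of_upperTriangular (by
          intro i j hij
          simp only [hTm, Matrix.of_apply]
          exact hneg _ _ (by
            simp only [id] at hij
            have : (j : ℕ) < (i : ℕ) := hij
            omega))]
        refine Finset.prod_eq_one fun i _ => ?_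
        simp only [hTm, Matrix.of_apply, sub_self]
        exact h00 _
      -- the vector
      set v : Fin (k + 1) → (SSRing n) := fun l =>
        PowerSeries.coeff (R := SSRing n) l ((∏ t ∈ Finset.Ico 1 (l : ℕ),
          (1 - PowerSeries.C (R := SSRing n) (MvPolynomial.C (a (1 - (t : ℤ)))) * PowerSeries.X)) * Gm) with hv
      -- entries of Tm via the closed formula, then STAIR
      have hvT : Matrix.vecMul v Tm = Pi.single 0 1 := by
        funext j
        rw [Matrix.vecMul, dotProduct]
        set jn := (j : ℕ) with hjn
        have hrange : ∑ l : Fin (k + 1), v l * Tm l j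
            = ∑ l ∈ Finset.range (k + 1),
                (PowerSeries.coeff (R := SSRing n) l ((∏ t ∈ Finset.Ico 1 l,
                  (1 - PowerSeries.C (R := SSRing n) (MvPolynomial.C (a (1 - (t : ℤ)))) * PowerSeries.X)) * Gm)) *
                (h (tauSeq a (1 - (jn : ℤ))) ((jn : ℤ) - (l : ℤ))) :=
          Fin.sum_univ_eq_sum_range (fun l : ℕ =>
            (PowerSeries.coeff (R := SSRing n) l ((∏ t ∈ Finset.Ico 1 l,
              (1 - PowerSeries.C (R := SSRing n) (MvPolynomial.C (a (1 - (t : ℤ)))) * PowerSeries.X)) * Gm)) *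
            (h (tauSeq a (1 - (jn : ℤ))) ((jn : ℤ) - (l : ℤ)))) (k + 1)
        rw [hrange]
        -- kill the terms with l > jn
        have hsub : Finset.range (jn + 1) ⊆ Finset.range (k + 1) := by
          apply Finset.range_subset_range.mpr
          have := j.isLt
          omega
        rw [← Finset.sum_subset hsub (by
          intro x hx hxn
          simp only [Finset.mem_range] at hx hxn
          have : (jn : ℤ) - (x : ℤ) < 0 := by omega
          rw [hneg _ _ this, mul_zero])]
        by_cases hj0 : jn = 0
        · -- j = 0
          rw [hj0]
          rw [Finset.sum_range_one]
          have hT00 : h (tauSeq a (1 - ((0 : ℕ) : ℤ))) (((0 : ℕ) : ℤ) - ((0 : ℕ) : ℤ)) = 1 := by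
            norm_num
            exact h00 _
          rw [hT00, mul_one]
          have hIco0 : Finset.Ico 1 0 = (∅ : Finset ℕ) := by simp
          rw [hIco0, Finset.prod_empty, one_mul]
          have hc0 : PowerSeries.coeff (R := SSRing n) 0 Gm = 1 := by
            rw [hGm, PowerSeries.coeff_rescale]
            have : PowerSeries.coeff (R := SSRing n) 0 G = 1 := by
              rw [PowerSeries.coeff_zero_eq_constantCoeff_apply, hG, map_mul]
              have hhA : PowerSeries.constantCoeff (R := SSRing n) A = 1 := by
                rw [hA, map_prod]; exact Finset.prod_eq_one fun i _ => by simp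
              rw [hhA, PowerSeries.constantCoeff_invOfUnit, one_mul]; rfl
            rw [this]
            norm_num
          rw [hc0]
          have : j = 0 := by
            apply Fin.ext
            rw [← hjn, hj0]
            rfl
          rw [this]
          simp
        · -- j ≠ 0 : use stair
          have hj1 : 1 ≤ jn := by omega
          have hstair := stair Gm F hGmF
            (fun t => MvPolynomial.C (a (1 - (t : ℤ)))) jn hj1
          have hmatch : ∀ l ∈ Finset.range (jn + 1),
              (PowerSeries.coeff (R := SSRing n) l ((∏ t ∈ Finset.Ico 1 l,
                (1 - PowerSeries.C (R := SSRing n) (MvPolynomial.C (a (1 - (t : ℤ)))) * PowerSeries.X)) * Gm)) *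
                (h (tauSeq a (1 - (jn : ℤ))) ((jn : ℤ) - (l : ℤ)))
              = PowerSeries.coeff (R := SSRing n) l ((∏ t ∈ Finset.Ico 1 l,
                (1 - PowerSeries.C (R := SSRing n) (MvPolynomial.C (a (1 - (t : ℤ)))) * PowerSeries.X)) * Gm) *
                PowerSeries.coeff (R := SSRing n) (jn - l) ((∏ t ∈ Finset.Ico (l + 1) jn,
                (1 - PowerSeries.C (R := SSRing n) (MvPolynomial.C (a (1 - (t : ℤ)))) * PowerSeries.X)) * F) := by
            intro l hl
            simp only [Finset.mem_range] at hl
            have hlj : l ≤ jn := by omega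
            congr 1
            have hcast : (jn : ℤ) - (l : ℤ) = ((jn - l : ℕ) : ℤ) := by omega
            rw [hcast, cfH (1 - (jn : ℤ)) (jn - l)]
            refine congrArg (fun P => PowerSeries.coeff (R := SSRing n) (jn - l) (P * F)) ?_
            -- window reindex + reflect
            rw [Finset.prod_Ico_eq_prod_range]
            have hd : jn - (l + 1) = jn - l - 1 := by omega
            rw [hd]
            rw [← Finset.prod_range_reflect (fun i => (1 - PowerSeries.C (R := SSRing n)
              (MvPolynomial.C (a (1 - ((l + 1 + i : ℕ) : ℤ)))) * PowerSeries.X)) (jn - l - 1)]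
            refine Finset.prod_congr rfl fun i hi => ?_
            simp only [Finset.mem_range] at hi
            congr 3
            have h1 : tauSeq a (1 - (jn : ℤ)) ((i : ℤ) + 1) = a ((i : ℤ) + 1 + (1 - (jn : ℤ))) := rfl
            rw [h1]
            have h2 : ((l + 1 + (jn - l - 1 - 1 - i) : ℕ) : ℤ) = (jn : ℤ) - 1 - (i : ℤ) := by
              omega
            rw [h2]
            ring_nf
          rw [Finset.sum_congr rfl hmatch, hstair]
          have : j ≠ 0 := by
            intro hc
            rw [hc] at hjn
            simp at hjn
            omega
          rw [Pi.single_eq_of_ne this]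
      -- apply the determinant lemma
      have hdm := det_minor_of_vecMul_single Tm hTdet v hvT
      -- identify schurDet with the minor
      have hschur : schurDet h a (columnP k)
          = Matrix.det (Matrix.of fun i j : Fin k => Tm i.castSucc j.succ) := by
        unfold schurDet
        rw [← Matrix.det_submatrix_equiv_self (finCongr hplen)
          (Matrix.of fun i j : Fin k => Tm i.castSucc j.succ)]
        congr 1
        ext i j
        rw [Matrix.submatrix_apply, Matrix.of_apply, Matrix.of_apply]
        simp only [hTm, Matrix.of_apply]
        have hci : ((finCongr hplen i : Fin k) : ℕ) = (i : ℕ) := rfl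
        have hcj : ((finCongr hplen j : Fin k) : ℕ) = (j : ℕ) := rfl
        have hcol : columnP k (i : ℕ) = 1 := by
          unfold columnP
          rw [if_pos (by have := (finCongr hplen i).isLt; rw [hci] at this; exact this)]
        rw [hcol]
        have e1 : (1 - (((finCongr hplen j).succ : ℕ) : ℤ)) = -((j : ℕ) : ℤ) := by
          rw [Fin.val_succ, hcj]; push_cast; ring
        have e2 : ((((finCongr hplen j).succ : ℕ) : ℤ) - (((finCongr hplen i).castSucc : ℕ) : ℤ))
            = ((1 : ℤ) - ((i : ℕ) : ℤ) + ((j : ℕ) : ℤ)) := by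
          rw [Fin.val_succ, Fin.coe_castSucc, hci, hcj]; push_cast; ring
        rw [e1, e2]
        norm_num
      rw [hschur, hdm]
      -- v (last) = (-1)^k Et k
      have hvlast : v (Fin.last k) = (-1 : (SSRing n)) ^ k * Et k := by
        have : ((Fin.last k : Fin (k + 1)) : ℕ) = k := rfl
        rw [hv]
        simp only [this]
        rw [← cfE' k]
      rw [hvlast, ← mul_assoc]
      have hsq : (-1 : (SSRing n)) ^ k * (-1 : (SSRing n)) ^ k = 1 := by
        rw [← pow_add, ← two_mul, pow_mul]
        norm_num
      rw [hsq, one_mul]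
  -- final assembly
  refine PowerSeries.ext fun N => ?_
  rw [PowerSeries.coeff_mk, hexpG N]
  exact Finset.sum_congr rfl fun k _ => by rw [key k]



end
end

section
/- Let μ = (p₁,…,p_d | q₁,…,q_d) be a partition in Frobenius coordinates and a = (aᵢ)_{i∈ℤ} any sequence of complex numbers with dual sequence â. Then: ∏_{(i,j)∈μ} (a_{μᵢ−i+1} − a_{j−μ'ⱼ}) · ∏_{1≤i<k≤d} (a_{pᵢ+1} − a_{p_k+1})(â_{qᵢ+1} − â_{q_k+1}) = ∏_{i=1}^{d} [ ∏_{t=1}^{pᵢ}(a_{pᵢ+1} − a_t) · ∏_{t=1}^{qᵢ}(â_{qᵢ+1} − â_t) ] · ∏_{i=1}^{d} ∏_{j=1}^{d} (a_{pᵢ+1} + â_{qⱼ+1}). -/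
open Finset

noncomputable section

lemma nat_mem_iff_lt_card {S : Set ℕ} (hfin : S.Finite)
    (hdc : ∀ ⦃i j : ℕ⦄, i ≤ j → j ∈ S → i ∈ S) (i : ℕ) :
    i ∈ S ↔ i < Nat.card S := by
  classical
  rw [Nat.card_eq_card_finite_toFinset hfin]
  constructor
  · intro hi
    have hsub : Finset.range (i + 1) ⊆ hfin.toFinset := by
      intro j hj
      simp only [Finset.mem_range] at hj
      simp only [Set.Finite.mem_toFinset]
      exact hdc (Nat.lt_succ_iff.mp hj) hi
    have := Finset.card_le_card hsub
    simpa using this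
  · intro hi
    by_contra hmem
    have hsub : hfin.toFinset ⊆ Finset.range i := by
      intro j hj
      simp only [Set.Finite.mem_toFinset] at hj
      simp only [Finset.mem_range]
      by_contra hji
      exact hmem (hdc (le_of_not_gt hji) hj)
    have := Finset.card_le_card hsub
    simp at this
    omega

lemma lt_conjP_iff {μ : ℕ → ℕ} (hμ : IsPartition μ) (i j : ℕ) : i < conjP μ j ↔ j < μ i := by
  obtain ⟨hA, N, hN⟩ := hμ
  have hfin : {i : ℕ | j < μ i}.Finite := by
    apply Set.Finite.subset (Set.finite_Iio N)
    intro x hx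
    simp only [Set.mem_setOf_eq] at hx
    simp only [Set.mem_Iio]
    by_contra h
    have := hN x (le_of_not_gt h)
    omega
  have := nat_mem_iff_lt_card hfin
    (fun i' i hle hi => lt_of_lt_of_le hi (hA hle)) i
  exact this.symm

lemma lt_depth_iff {μ : ℕ → ℕ} (hμ : IsPartition μ) (i : ℕ) : i < depth μ ↔ i < μ i := by
  obtain ⟨hA, N, hN⟩ := hμ
  have hfin : {i : ℕ | i < μ i}.Finite := by
    apply Set.Finite.subset (Set.finite_Iio N)
    intro x hx
    simp only [Set.mem_setOf_eq] at hx
    simp only [Set.mem_Iio]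
    by_contra h
    have := hN x (le_of_not_gt h)
    omega
  have := nat_mem_iff_lt_card hfin
    (fun i' i hle hi => lt_of_le_of_lt hle (lt_of_lt_of_le hi (hA hle))) i
  exact this.symm

lemma lt_plen_iff {μ : ℕ → ℕ} (hμ : IsPartition μ) (i : ℕ) : i < plen μ ↔ 0 < μ i := by
  obtain ⟨hA, N, hN⟩ := hμ
  have hfin : {i : ℕ | 0 < μ i}.Finite := by
    apply Set.Finite.subset (Set.finite_Iio N)
    intro x hx
    simp only [Set.mem_setOf_eq] at hx
    simp only [Set.mem_Iio]
    by_contra h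
    have := hN x (le_of_not_gt h)
    omega
  have := nat_mem_iff_lt_card hfin
    (fun i' i hle hi => lt_of_lt_of_le hi (hA hle)) i
  exact this.symm

lemma conjP_isPartition {μ : ℕ → ℕ} (hμ : IsPartition μ) : IsPartition (conjP μ) := by
  refine ⟨fun j j' hle => ?_, ⟨μ 0, fun j hj => ?_⟩⟩
  · refine le_of_forall_lt fun c hc => ?_
    rw [lt_conjP_iff hμ] at hc ⊢
    exact lt_of_le_of_lt hle hc
  · by_contra h
    have h0 : 0 < conjP μ j := Nat.pos_of_ne_zero h
    rw [lt_conjP_iff hμ] at h0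
    have := hμ.1 (Nat.zero_le 0)
    omega

lemma conjP_conjP {μ : ℕ → ℕ} (hμ : IsPartition μ) (i : ℕ) : conjP (conjP μ) i = μ i := by
  have h := conjP_isPartition hμ
  apply le_antisymm
  · refine le_of_forall_lt fun c hc => ?_
    rw [lt_conjP_iff h, lt_conjP_iff hμ] at hc
    exact hc
  · refine le_of_forall_lt fun c hc => ?_
    rw [lt_conjP_iff h, lt_conjP_iff hμ]
    exact hc

lemma key2 {μ : ℕ → ℕ} (hμ : IsPartition μ) {r : ℕ} (hr : r < depth μ) (f : ℤ → ℂ) :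
    (∏ J ∈ Finset.Ico (depth μ) (μ r), f ((J : ℤ) + 1 - (conjP μ J : ℤ))) *
      ∏ k ∈ Finset.Ico (r + 1) (depth μ), f ((μ k : ℤ) - (k : ℤ)) =
    ∏ t ∈ Finset.range (μ r - (r + 1)), f ((t : ℤ) + 1) := by
  classical
  set d := depth μ with hd
  have hconj := lt_conjP_iff hμ
  have hdep := lt_depth_iff hμ
  have hanti := hμ.1
  have hdle : d ≤ μ r := by
    have h1 : d - 1 < μ (d - 1) := (hdep (d-1)).mp (by omega)
    have h2 : μ (d - 1) ≤ μ r := hanti (by omega)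
    omega
  -- the two image maps
  set g : ℕ → ℤ := fun J => (J : ℤ) + 1 - (conjP μ J : ℤ) with hg
  set h : ℕ → ℤ := fun k => (μ k : ℤ) - (k : ℤ) with hh
  have hAnti : ∀ k k' : ℕ, k < k' → h k' < h k := by
    intro k k' hlt
    have := hanti (le_of_lt hlt)
    simp only [hh]
    omega
  have hMono : ∀ J J' : ℕ, J < J' → g J < g J' := by
    intro J J' hlt
    have : conjP μ J' ≤ conjP μ J := by
      refine le_of_forall_lt fun c hc => ?_
      rw [hconj] at hc ⊢
      omega
    simp only [hg]
    omega
  have hNE : ∀ k J : ℕ, h k ≠ g J := by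
    intro k J
    rcases lt_or_ge J (μ k) with h1 | h1
    · have h2 : k < conjP μ J := (hconj k J).mpr h1
      simp only [hh, hg]; omega
    · have h2 : ¬ (k < conjP μ J) := by rw [hconj]; omega
      simp only [hh, hg]; omega
  set A : Finset ℤ := (Finset.Ico (r + 1) d).image h with hA
  set B : Finset ℤ := (Finset.Ico d (μ r)).image g with hB
  set T : Finset ℤ := Finset.Icc 1 ((μ r : ℤ) - r - 1) with hT
  have hinjh : Set.InjOn h (Finset.Ico (r+1) d) := by
    intro x _ y _ hxy
    by_contra hne
    rcases Nat.lt_or_ge x y with hl | hl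
    · exact (hAnti x y hl).ne' hxy
    · have : y < x := by omega
      exact (hAnti y x this).ne hxy
  have hinjg : Set.InjOn g (Finset.Ico d (μ r)) := by
    intro x _ y _ hxy
    by_contra hne
    rcases Nat.lt_or_ge x y with hl | hl
    · exact absurd hxy (ne_of_lt (hMono x y hl))
    · have : y < x := by omega
      exact absurd hxy (ne_of_gt (hMono y x this))
  have hAT : A ⊆ T := by
    intro x hx
    simp only [hA, Finset.mem_image, Finset.mem_Ico] at hx
    obtain ⟨k, ⟨hk1, hk2⟩, rfl⟩ := hx
    have h1 : k < μ k := (hdep k).mp hk2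
    have h2 : μ k ≤ μ r := hanti (by omega)
    simp only [hT, Finset.mem_Icc, hh]
    omega
  have hBT : B ⊆ T := by
    intro x hx
    simp only [hB, Finset.mem_image, Finset.mem_Ico] at hx
    obtain ⟨J, ⟨hJ1, hJ2⟩, rfl⟩ := hx
    have h1 : ¬ (J < conjP μ J) := by
      rw [hconj, ← hdep]; omega
    have h2 : r < conjP μ (μ r - 1) := by
      rw [hconj]; omega
    have h3 : conjP μ (μ r - 1) ≤ conjP μ J := by
      refine le_of_forall_lt fun c hc => ?_
      rw [hconj] at hc ⊢
      omega
    simp only [hT, Finset.mem_Icc, hg]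
    omega
  have hdisj : Disjoint A B := by
    rw [Finset.disjoint_left]
    intro x hxA hxB
    simp only [hA, Finset.mem_image] at hxA
    simp only [hB, Finset.mem_image] at hxB
    obtain ⟨k, _, rfl⟩ := hxA
    obtain ⟨J, _, hJ⟩ := hxB
    exact hNE k J hJ.symm
  have hcardA : A.card = d - (r + 1) := by
    rw [hA, Finset.card_image_of_injOn hinjh, Nat.card_Ico]
  have hcardB : B.card = μ r - d := by
    rw [hB, Finset.card_image_of_injOn hinjg, Nat.card_Ico]
  have hcardT : T.card = μ r - (r + 1) := by
    rw [hT, Int.card_Icc]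
    omega
  have hunion : A ∪ B = T := by
    apply Finset.eq_of_subset_of_card_le (Finset.union_subset hAT hBT)
    rw [Finset.card_union_of_disjoint hdisj, hcardA, hcardB, hcardT]
    omega
  have hrange : T = (Finset.range (μ r - (r + 1))).image (fun t : ℕ => (t : ℤ) + 1) := by
    ext x
    simp only [hT, Finset.mem_Icc, Finset.mem_image, Finset.mem_range]
    constructor
    · rintro ⟨h1, h2⟩
      exact ⟨(x - 1).toNat, by omega, by omega⟩
    · rintro ⟨t, ht, rfl⟩
      omega
  calc (∏ J ∈ Finset.Ico d (μ r), f (g J)) * ∏ k ∈ Finset.Ico (r + 1) d, f (h k)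
      = (∏ x ∈ B, f x) * ∏ x ∈ A, f x := by
        rw [hA, hB, Finset.prod_image hinjg, Finset.prod_image hinjh]
    _ = ∏ x ∈ A ∪ B, f x := by rw [Finset.prod_union hdisj, mul_comm]
    _ = ∏ x ∈ T, f x := by rw [hunion]
    _ = ∏ t ∈ Finset.range (μ r - (r + 1)), f ((t : ℤ) + 1) := by
        rw [hrange, Finset.prod_image]
        intro x _ y _ hxy
        exact Nat.cast_injective (add_right_cancel hxy)

lemma depth_conjP {μ : ℕ → ℕ} (hμ : IsPartition μ) : depth (conjP μ) = depth μ := by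
  have hν := conjP_isPartition hμ
  apply le_antisymm
  · refine le_of_forall_lt fun c hc => ?_
    rw [lt_depth_iff hν, lt_conjP_iff hμ] at hc
    rw [lt_depth_iff hμ]
    exact hc
  · refine le_of_forall_lt fun c hc => ?_
    rw [lt_depth_iff hμ] at hc
    rw [lt_depth_iff hν, lt_conjP_iff hμ]
    exact hc

lemma key3 {μ : ℕ → ℕ} (hμ : IsPartition μ) {r : ℕ} (hr : r < depth μ)
    {s : ℕ} (hs : s ≤ depth μ) (f : ℤ → ℂ) :
    (∏ j ∈ Finset.Ico s (μ r), f ((j : ℤ) + 1 - (conjP μ j : ℤ))) *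
      ∏ k ∈ Finset.Ico (r + 1) (depth μ), f ((μ k : ℤ) - (k : ℤ)) =
    (∏ t ∈ Finset.range (μ r - (r + 1)), f ((t : ℤ) + 1)) *
      ∏ j ∈ Finset.Ico s (depth μ), f ((j : ℤ) + 1 - (conjP μ j : ℤ)) := by
  have hdep := lt_depth_iff hμ
  have hdle : depth μ ≤ μ r := by
    have h1 : depth μ - 1 < μ (depth μ - 1) := (hdep _).mp (by omega)
    have h2 : μ (depth μ - 1) ≤ μ r := hμ.1 (by omega)
    omega
  rw [← Finset.prod_Ico_consecutive (fun j => f ((j : ℤ) + 1 - (conjP μ j : ℤ))) hs hdle,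
    mul_assoc, key2 hμ hr f, mul_comm]

/-- For a partition `μ = (p₁,…,p_d | q₁,…,q_d)` and any sequence `a`
with dual `â`:
`∏_{(i,j)∈μ}(a_{μᵢ-i+1} - a_{j-μ'ⱼ}) · ∏_{i<k≤d}(a_{pᵢ+1}-a_{p_k+1})(â_{qᵢ+1}-â_{q_k+1})`
`= ∏_{i=1}^{d}[∏_{t=1}^{pᵢ}(a_{pᵢ+1}-a_t)·∏_{t=1}^{qᵢ}(â_{qᵢ+1}-â_t)] · ∏_{i,j=1}^{d}(a_{pᵢ+1}+â_{qⱼ+1})`. -/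
theorem hook_product_identity
    (μ : ℕ → ℕ) (hμ : IsPartition μ) (a : ℤ → ℂ) :
    (∏ i ∈ Finset.range (plen μ), ∏ j ∈ Finset.range (μ i),
        (a ((μ i : ℤ) - (i : ℤ)) - a ((j : ℤ) + 1 - (conjP μ j : ℤ)))) *
      ∏ i ∈ Finset.range (depth μ), ∏ k ∈ Finset.Ico (i + 1) (depth μ),
        ((a ((frobP μ i : ℤ) + 1) - a ((frobP μ k : ℤ) + 1)) *
          (adual a ((frobQ μ i : ℤ) + 1) - adual a ((frobQ μ k : ℤ) + 1))) =
    (∏ i ∈ Finset.range (depth μ),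
        ((∏ t ∈ Finset.range (frobP μ i), (a ((frobP μ i : ℤ) + 1) - a ((t : ℤ) + 1))) *
          ∏ t ∈ Finset.range (frobQ μ i),
            (adual a ((frobQ μ i : ℤ) + 1) - adual a ((t : ℤ) + 1)))) *
      ∏ i ∈ Finset.range (depth μ), ∏ j ∈ Finset.range (depth μ),
        (a ((frobP μ i : ℤ) + 1) + adual a ((frobQ μ j : ℤ) + 1)) := by
  classical
  have hanti := hμ.1
  obtain ⟨N0, hN0⟩ := hμ.2
  have hdep := lt_depth_iff hμ
  have hconj := lt_conjP_iff hμ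
  have hplen := lt_plen_iff hμ
  have hν : IsPartition (conjP μ) := conjP_isPartition hμ
  have hdd : depth (conjP μ) = depth μ := depth_conjP hμ
  have hcc : ∀ i, conjP (conjP μ) i = μ i := conjP_conjP hμ
  -- basic facts usable by omega (as implications)
  have hdepf : ∀ i, i < depth μ → i < μ i := fun i hi => (hdep i).mp hi
  have hqf : ∀ j, j < depth μ → j < conjP μ j := fun j hj => (hconj j j).mpr (hdepf j hj)
  have hqf' : ∀ j, ¬ j < depth μ → conjP μ j ≤ j := fun j hj => by
    by_contra h
    exact hj ((hdep j).mpr ((hconj j j).mp (by omega)))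
  have hLN : plen μ ≤ N0 := le_of_forall_lt fun c hc => by
    have h1 : 0 < μ c := (hplen c).mp hc
    by_contra h
    have := hN0 c (by omega)
    omega
  have hcN : ∀ j, conjP μ j ≤ N0 := fun j => le_of_forall_lt fun c hc => by
    have h1 : j < μ c := (hconj c j).mp hc
    by_contra h
    have := hN0 c (by omega)
    omega
  have hdN : depth μ ≤ N0 := le_of_forall_lt fun c hc => by
    have h1 : c < μ c := hdepf c hc
    by_contra h
    have := hN0 c (by omega)
    omega
  -- Step 1: clean up goal: express everything via μ and conjP over ℤ
  have eCross : ∀ i ∈ Finset.range (depth μ), (∏ k ∈ Finset.Ico (i + 1) (depth μ),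
        ((a ((frobP μ i : ℤ) + 1) - a ((frobP μ k : ℤ) + 1)) *
          (adual a ((frobQ μ i : ℤ) + 1) - adual a ((frobQ μ k : ℤ) + 1)))) =
      (∏ k ∈ Finset.Ico (i + 1) (depth μ),
        (a ((μ i : ℤ) - i) - a ((μ k : ℤ) - k))) *
      ∏ k ∈ Finset.Ico (i + 1) (depth μ),
        (a ((k : ℤ) + 1 - (conjP μ k : ℤ)) - a ((i : ℤ) + 1 - (conjP μ i : ℤ))) := by
    intro i hi
    rw [← Finset.prod_mul_distrib]
    refine Finset.prod_congr rfl fun k hk => ?_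
    simp only [Finset.mem_range] at hi
    simp only [Finset.mem_Ico] at hk
    have h1 := hdepf i hi
    have h2 := hdepf k hk.2
    have h3 := hqf i hi
    have h4 := hqf k hk.2
    have e1 : ((frobP μ i : ℕ) : ℤ) + 1 = (μ i : ℤ) - i := by unfold frobP; omega
    have e2 : ((frobP μ k : ℕ) : ℤ) + 1 = (μ k : ℤ) - k := by unfold frobP; omega
    have e3 : (1 : ℤ) - ((frobQ μ i : ℕ) + 1) = (i : ℤ) + 1 - (conjP μ i : ℤ) := by
      unfold frobQ; omega
    have e4 : (1 : ℤ) - ((frobQ μ k : ℕ) + 1) = (k : ℤ) + 1 - (conjP μ k : ℤ) := by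
      unfold frobQ; omega
    simp only [adual, e1, e2, e3, e4]
    ring
  have ePQ : ∀ i ∈ Finset.range (depth μ),
      ((∏ t ∈ Finset.range (frobP μ i), (a ((frobP μ i : ℤ) + 1) - a ((t : ℤ) + 1))) *
        ∏ t ∈ Finset.range (frobQ μ i), (adual a ((frobQ μ i : ℤ) + 1) - adual a ((t : ℤ) + 1))) =
      (∏ t ∈ Finset.range (μ i - (i + 1)), (a ((μ i : ℤ) - i) - a ((t : ℤ) + 1))) *
        ∏ t ∈ Finset.range (conjP μ i - (i + 1)),
          (a (-(t : ℤ)) - a ((i : ℤ) + 1 - (conjP μ i : ℤ))) := by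
    intro i hi
    simp only [Finset.mem_range] at hi
    have h1 := hdepf i hi
    have h3 := hqf i hi
    congr 1
    · refine Finset.prod_congr rfl fun t _ => ?_
      have e1 : ((frobP μ i : ℕ) : ℤ) + 1 = (μ i : ℤ) - i := by unfold frobP; omega
      rw [e1]
    · refine Finset.prod_congr rfl fun t _ => ?_
      have e3 : (1 : ℤ) - ((frobQ μ i : ℕ) + 1) = (i : ℤ) + 1 - (conjP μ i : ℤ) := by
        unfold frobQ; omega
      have e5 : (1 : ℤ) - ((t : ℤ) + 1) = -(t : ℤ) := by ring
      simp only [adual, e3, e5]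
      ring
  have eMix : ∀ i ∈ Finset.range (depth μ), (∏ j ∈ Finset.range (depth μ),
        (a ((frobP μ i : ℤ) + 1) + adual a ((frobQ μ j : ℤ) + 1))) =
      ∏ j ∈ Finset.range (depth μ),
        (a ((μ i : ℤ) - i) - a ((j : ℤ) + 1 - (conjP μ j : ℤ))) := by
    intro i hi
    simp only [Finset.mem_range] at hi
    refine Finset.prod_congr rfl fun j hj => ?_
    simp only [Finset.mem_range] at hj
    have e1 : ((frobP μ i : ℕ) : ℤ) + 1 = (μ i : ℤ) - i := by
      unfold frobP; have := hdepf i hi; omega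
    have e3 : (1 : ℤ) - ((frobQ μ j : ℕ) + 1) = (j : ℤ) + 1 - (conjP μ j : ℤ) := by
      unfold frobQ; have := hqf j hj; omega
    simp only [adual, e1, e3]
    ring
  rw [Finset.prod_congr rfl eCross, Finset.prod_congr rfl ePQ, Finset.prod_congr rfl eMix]
  -- box decomposition
  have e1 : (∏ i ∈ Finset.range (plen μ), ∏ j ∈ Finset.range (μ i),
        (a ((μ i : ℤ) - i) - a ((j : ℤ) + 1 - (conjP μ j : ℤ)))) =
      ∏ i ∈ Finset.range N0, ∏ j ∈ Finset.range (μ i),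
        (a ((μ i : ℤ) - i) - a ((j : ℤ) + 1 - (conjP μ j : ℤ))) := by
    apply Finset.prod_subset (Finset.range_subset_range.mpr hLN)
    intro i _ hi
    have h0 : μ i = 0 := by
      rcases Nat.eq_zero_or_pos (μ i) with h | h
      · exact h
      · exact absurd ((hplen i).mpr h) (by simpa using hi)
    simp [h0]
  have e2 : ∀ i ∈ Finset.range N0, (∏ j ∈ Finset.range (μ i),
        (a ((μ i : ℤ) - i) - a ((j : ℤ) + 1 - (conjP μ j : ℤ)))) =
      (∏ j ∈ Finset.range (min i (μ i)),
        (a ((μ i : ℤ) - i) - a ((j : ℤ) + 1 - (conjP μ j : ℤ)))) *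
      ∏ j ∈ Finset.Ico i (μ i),
        (a ((μ i : ℤ) - i) - a ((j : ℤ) + 1 - (conjP μ j : ℤ))) := by
    intro i _
    rcases le_or_gt i (μ i) with h | h
    · rw [min_eq_left h]
      exact (Finset.prod_range_mul_prod_Ico _ h).symm
    · rw [min_eq_right h.le, Finset.Ico_eq_empty (by omega), Finset.prod_empty, mul_one]
  rw [e1, Finset.prod_congr rfl e2, Finset.prod_mul_distrib]
  have e3 : (∏ i ∈ Finset.range N0, ∏ j ∈ Finset.range (min i (μ i)),
        (a ((μ i : ℤ) - i) - a ((j : ℤ) + 1 - (conjP μ j : ℤ)))) =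
      ∏ j ∈ Finset.range N0, ∏ i ∈ Finset.Ico (j + 1) (conjP μ j),
        (a ((μ i : ℤ) - i) - a ((j : ℤ) + 1 - (conjP μ j : ℤ))) := by
    apply Finset.prod_comm'
    intro i j
    simp only [Finset.mem_range, Finset.mem_Ico, lt_min_iff]
    constructor
    · rintro ⟨h1, h2, h3⟩
      have h4 := (hconj i j).mpr h3
      exact ⟨⟨by omega, h4⟩, by omega⟩
    · rintro ⟨⟨h1, h2⟩, h3⟩
      have h4 := (hconj i j).mp h2
      have h5 := hcN j
      exact ⟨by omega, by omega, h4⟩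
  have e4 : (∏ j ∈ Finset.range N0, ∏ i ∈ Finset.Ico (j + 1) (conjP μ j),
        (a ((μ i : ℤ) - i) - a ((j : ℤ) + 1 - (conjP μ j : ℤ)))) =
      ∏ j ∈ Finset.range (depth μ), ∏ i ∈ Finset.Ico (j + 1) (conjP μ j),
        (a ((μ i : ℤ) - i) - a ((j : ℤ) + 1 - (conjP μ j : ℤ))) := by
    refine (Finset.prod_subset (Finset.range_subset_range.mpr hdN) fun j _ hj => ?_).symm
    have h5 : conjP μ j ≤ j := hqf' j (by simpa using hj)
    rw [Finset.Ico_eq_empty (by omega), Finset.prod_empty]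
  have e5 : (∏ i ∈ Finset.range N0, ∏ j ∈ Finset.Ico i (μ i),
        (a ((μ i : ℤ) - i) - a ((j : ℤ) + 1 - (conjP μ j : ℤ)))) =
      ∏ i ∈ Finset.range (depth μ), ∏ j ∈ Finset.Ico i (μ i),
        (a ((μ i : ℤ) - i) - a ((j : ℤ) + 1 - (conjP μ j : ℤ))) := by
    refine (Finset.prod_subset (Finset.range_subset_range.mpr hdN) fun i _ hi => ?_).symm
    have h5 : ¬ i < μ i := by
      intro h
      exact hi (Finset.mem_range.mpr ((hdep i).mpr h))
    rw [Finset.Ico_eq_empty (by omega), Finset.prod_empty]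
  rw [e3, e4, e5]
  rw [Finset.prod_mul_distrib, Finset.prod_mul_distrib]
  -- per-row identities
  have hrow : ∀ r ∈ Finset.range (depth μ),
      (∏ j ∈ Finset.Ico r (μ r), (a ((μ r : ℤ) - r) - a ((j : ℤ) + 1 - (conjP μ j : ℤ)))) *
        (∏ k ∈ Finset.Ico (r + 1) (depth μ), (a ((μ r : ℤ) - r) - a ((μ k : ℤ) - k))) =
      (∏ t ∈ Finset.range (μ r - (r + 1)), (a ((μ r : ℤ) - r) - a ((t : ℤ) + 1))) *
        ∏ j ∈ Finset.Ico r (depth μ),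
          (a ((μ r : ℤ) - r) - a ((j : ℤ) + 1 - (conjP μ j : ℤ))) := by
    intro r hr
    simp only [Finset.mem_range] at hr
    exact key3 hμ hr hr.le (fun x => a ((μ r : ℤ) - r) - a x)
  have hcol : ∀ r ∈ Finset.range (depth μ),
      (∏ i ∈ Finset.Ico (r + 1) (conjP μ r),
          (a ((μ i : ℤ) - i) - a ((r : ℤ) + 1 - (conjP μ r : ℤ)))) *
        (∏ k ∈ Finset.Ico (r + 1) (depth μ),
          (a ((k : ℤ) + 1 - (conjP μ k : ℤ)) - a ((r : ℤ) + 1 - (conjP μ r : ℤ)))) =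
      (∏ t ∈ Finset.range (conjP μ r - (r + 1)),
          (a (-(t : ℤ)) - a ((r : ℤ) + 1 - (conjP μ r : ℤ)))) *
        ∏ i ∈ Finset.Ico (r + 1) (depth μ),
          (a ((μ i : ℤ) - i) - a ((r : ℤ) + 1 - (conjP μ r : ℤ))) := by
    intro r hr
    simp only [Finset.mem_range] at hr
    have hrν : r < depth (conjP μ) := by rw [hdd]; exact hr
    have h := key3 hν hrν (show r + 1 ≤ depth (conjP μ) by omega)
      (fun x => a (1 - x) - a ((r : ℤ) + 1 - (conjP μ r : ℤ)))
    rw [hdd] at h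
    simp only [hcc] at h
    have c1 : ∀ (s : Finset ℕ), (∏ j ∈ s,
        (a (1 - ((j : ℤ) + 1 - (μ j : ℤ))) - a ((r : ℤ) + 1 - (conjP μ r : ℤ)))) =
        ∏ j ∈ s, (a ((μ j : ℤ) - j) - a ((r : ℤ) + 1 - (conjP μ r : ℤ))) := fun s =>
      Finset.prod_congr rfl fun j _ => by
        rw [show (1 - ((j : ℤ) + 1 - (μ j : ℤ))) = (μ j : ℤ) - (j : ℤ) by omega]
    have c2 : (∏ k ∈ Finset.Ico (r + 1) (depth μ),
        (a (1 - ((conjP μ k : ℤ) - (k : ℤ))) - a ((r : ℤ) + 1 - (conjP μ r : ℤ)))) =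
        ∏ k ∈ Finset.Ico (r + 1) (depth μ),
          (a ((k : ℤ) + 1 - (conjP μ k : ℤ)) - a ((r : ℤ) + 1 - (conjP μ r : ℤ))) :=
      Finset.prod_congr rfl fun k _ => by
        rw [show (1 - ((conjP μ k : ℤ) - (k : ℤ))) = (k : ℤ) + 1 - (conjP μ k : ℤ) by omega]
    have c3 : (∏ t ∈ Finset.range (conjP μ r - (r + 1)),
        (a (1 - ((t : ℤ) + 1)) - a ((r : ℤ) + 1 - (conjP μ r : ℤ)))) =
        ∏ t ∈ Finset.range (conjP μ r - (r + 1)),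
          (a (-(t : ℤ)) - a ((r : ℤ) + 1 - (conjP μ r : ℤ))) :=
      Finset.prod_congr rfl fun t _ => by
        rw [show (1 - ((t : ℤ) + 1)) = -(t : ℤ) by omega]
    rw [c1, c2, c3, c1] at h
    exact h
  have Hrow := Finset.prod_congr rfl hrow
  rw [Finset.prod_mul_distrib, Finset.prod_mul_distrib] at Hrow
  have Hcol := Finset.prod_congr rfl hcol
  rw [Finset.prod_mul_distrib, Finset.prod_mul_distrib] at Hcol
  -- triangle identity
  have hM : (∏ r ∈ Finset.range (depth μ), ∏ j ∈ Finset.Ico r (depth μ),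
        (a ((μ r : ℤ) - r) - a ((j : ℤ) + 1 - (conjP μ j : ℤ)))) *
      (∏ r ∈ Finset.range (depth μ), ∏ i ∈ Finset.Ico (r + 1) (depth μ),
        (a ((μ i : ℤ) - i) - a ((r : ℤ) + 1 - (conjP μ r : ℤ)))) =
      ∏ i ∈ Finset.range (depth μ), ∏ j ∈ Finset.range (depth μ),
        (a ((μ i : ℤ) - i) - a ((j : ℤ) + 1 - (conjP μ j : ℤ))) := by
    have s1 : ∀ i ∈ Finset.range (depth μ), (∏ j ∈ Finset.range (depth μ),
        (a ((μ i : ℤ) - i) - a ((j : ℤ) + 1 - (conjP μ j : ℤ)))) =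
        (∏ j ∈ Finset.range i,
          (a ((μ i : ℤ) - i) - a ((j : ℤ) + 1 - (conjP μ j : ℤ)))) *
        ∏ j ∈ Finset.Ico i (depth μ),
          (a ((μ i : ℤ) - i) - a ((j : ℤ) + 1 - (conjP μ j : ℤ))) := by
      intro i hi
      simp only [Finset.mem_range] at hi
      exact (Finset.prod_range_mul_prod_Ico _ hi.le).symm
    have s2 : (∏ i ∈ Finset.range (depth μ), ∏ j ∈ Finset.range i,
        (a ((μ i : ℤ) - i) - a ((j : ℤ) + 1 - (conjP μ j : ℤ)))) =
        ∏ j ∈ Finset.range (depth μ), ∏ i ∈ Finset.Ico (j + 1) (depth μ),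
          (a ((μ i : ℤ) - i) - a ((j : ℤ) + 1 - (conjP μ j : ℤ))) := by
      apply Finset.prod_comm'
      intro i j
      simp only [Finset.mem_range, Finset.mem_Ico]
      omega
    rw [Finset.prod_congr rfl s1, Finset.prod_mul_distrib, s2]
    ring
  -- final assembly
  have final : ∀ C R X Y P U Q V M : ℂ, R * X = P * U → C * Y = Q * V → U * V = M →
      C * R * (X * Y) = P * Q * M := by
    intro C R X Y P U Q V M h1 h2 h3
    rw [← h3]
    calc C * R * (X * Y) = R * X * (C * Y) := by ring
      _ = P * U * (Q * V) := by rw [h1, h2]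
      _ = P * Q * (U * V) := by ring
  exact final _ _ _ _ _ _ _ _ _ Hrow Hcol hM
end
end
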